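/- arXiv:math/0611956 — 4 statements merged into one kernel-verified Lean document; each statement's English description precedes it below -/
import Mathlib

section
/- In the setup, 𝒫_T(a,b) is the disjoint union of 𝒫_T(a,b)_{i_1} and 𝒫_T(a,b)_{i_1'}; that is, every T-path from a to b has first edge either T_{i_1} or T_{i_1'}, and no T-path has both. (Lemma 2.4.) -/
open scoped BigOperators Classical

noncomputable section

/-- The `k`-th vertex of the regular `(n+3)`-gon inscribed in the unit circle. -/
def vtx (n : ℕ) (k : Fin (n + 3)) : EuclideanSpace ℝ (Fin 2) :=
  (WithLp.equiv 2 (Fin 2 → ℝ)).symm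
    ![Real.cos (2 * Real.pi * k / (n + 3)), Real.sin (2 * Real.pi * k / (n + 3))]

/-- `u` and `v` are cyclically adjacent vertices of the `(n+3)`-gon. -/
def Adj (n : ℕ) (u v : Fin (n + 3)) : Prop :=
  (u.val + 1) % (n + 3) = v.val ∨ (v.val + 1) % (n + 3) = u.val

/-- The pair `(u, v)` is a diagonal of the polygon. -/
def IsDiag (n : ℕ) (u v : Fin (n + 3)) : Prop :=
  u ≠ v ∧ ¬ Adj n u v

/-- The open segments joining `u,v` and `w,z` intersect (the two edges cross). -/
def Cross (n : ℕ) (u v w z : Fin (n + 3)) : Prop :=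
  (openSegment ℝ (vtx n u) (vtx n v) ∩ openSegment ℝ (vtx n w) (vtx n z)).Nonempty

/-- `(u,v)` and `(w,z)` are the same unordered pair of vertices. -/
def SamePair (n : ℕ) (u v w z : Fin (n + 3)) : Prop :=
  (u = w ∧ v = z) ∨ (u = z ∧ v = w)

/-- A triangulation of the `(n+3)`-gon: `2n+3` edges, the first `n` of which are
pairwise noncrossing diagonals (a maximal such family), and the remaining `n+3`
are the boundary edges. -/
structure Triangulation (n : ℕ) where
  src : Fin (2 * n + 3) → Fin (n + 3)
  tgt : Fin (2 * n + 3) → Fin (n + 3)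
  diag : ∀ i : Fin (2 * n + 3), i.val < n → IsDiag n (src i) (tgt i)
  bdry : ∀ i : Fin (2 * n + 3), n ≤ i.val → Adj n (src i) (tgt i)
  inj : ∀ i j : Fin (2 * n + 3), SamePair n (src i) (tgt i) (src j) (tgt j) → i = j
  noncross : ∀ i j : Fin (2 * n + 3), i ≠ j → ¬ Cross n (src i) (tgt i) (src j) (tgt j)
  bdry_complete : ∀ u v : Fin (n + 3), Adj n u v →
    ∃ i : Fin (2 * n + 3), n ≤ i.val ∧ SamePair n (src i) (tgt i) u v
  maximal : ∀ u v : Fin (n + 3), IsDiag n u v →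
    (∀ i : Fin (2 * n + 3), i.val < n → ¬ Cross n u v (src i) (tgt i)) →
    ∃ i : Fin (2 * n + 3), i.val < n ∧ SamePair n (src i) (tgt i) u v

/-- The edge `T_i` joins the vertices `u` and `v`. -/
def Joins (n : ℕ) (T : Triangulation n) (i : Fin (2 * n + 3)) (u v : Fin (n + 3)) : Prop :=
  SamePair n (T.src i) (T.tgt i) u v

/-- The edge `T_i` crosses the segment from `u` to `v`. -/
def ECross (n : ℕ) (T : Triangulation n) (i : Fin (2 * n + 3)) (u v : Fin (n + 3)) : Prop :=
  Cross n (T.src i) (T.tgt i) u v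

/-- The set of crossing points of the edge `T_i` with the segment from `u` to `v`. -/
def crossPts (n : ℕ) (T : Triangulation n) (i : Fin (2 * n + 3)) (u v : Fin (n + 3)) :
    Set (EuclideanSpace ℝ (Fin 2)) :=
  openSegment ℝ (vtx n (T.src i)) (vtx n (T.tgt i)) ∩ openSegment ℝ (vtx n u) (vtx n v)

/-- A default edge index. -/
def edef (n : ℕ) : Fin (2 * n + 3) := ⟨0, by omega⟩

/-- The data of a path: the list of vertices `a_0,…,a_ℓ` and the list of
edge indices `i_1,…,i_ℓ`. -/
abbrev PathData (n : ℕ) := List (Fin (n + 3)) × List (Fin (2 * n + 3))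

/-- `p` is a `T`-path from `a` to `b`: conditions (T1)–(T6). -/
def IsTPath (n : ℕ) (T : Triangulation n) (a b : Fin (n + 3)) (p : PathData n) : Prop :=
  -- the vertex list has one more entry than the edge list
  p.1.length = p.2.length + 1 ∧
  -- (T1)
  p.1.head? = some a ∧ p.1.getLast? = some b ∧
  -- (T2)
  (∀ k, k < p.2.length →
      Joins n T (p.2.getD k (edef n)) (p.1.getD k a) (p.1.getD (k + 1) a)) ∧
  -- (T3)
  p.2.Nodup ∧
  -- (T4)
  Odd p.2.length ∧
  -- (T5) (list position `k` carries the `(k+1)`-st edge of the path)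
  (∀ k, k < p.2.length → k % 2 = 1 → ECross n T (p.2.getD k (edef n)) a b) ∧
  -- (T6)
  (∀ j k, j < k → k < p.2.length →
      ∀ x ∈ crossPts n T (p.2.getD j (edef n)) a b,
      ∀ y ∈ crossPts n T (p.2.getD k (edef n)) a b,
        dist (vtx n a) x < dist (vtx n a) y)

/-- `𝒫_T(a,b)`: the set of `T`-paths from `a` to `b`. -/
def TPaths (n : ℕ) (T : Triangulation n) (a b : Fin (n + 3)) : Set (PathData n) :=
  { p | IsTPath n T a b p }

/-- `𝒫_T(a,b)_j`: `T`-paths from `a` to `b` whose first edge is `T_j`. -/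
def TPathsFirst (n : ℕ) (T : Triangulation n) (a b : Fin (n + 3)) (j : Fin (2 * n + 3)) :
    Set (PathData n) :=
  { p ∈ TPaths n T a b | p.2.head? = some j }

/-- `𝒫_T(a,b)_{-j}`: `T`-paths from `a` to `b` not containing the index `j`. -/
def TPathsAvoid (n : ℕ) (T : Triangulation n) (a b : Fin (n + 3)) (j : Fin (2 * n + 3)) :
    Set (PathData n) :=
  { p ∈ TPaths n T a b | j ∉ p.2 }

/-- `𝒫_T(a,b)_{jk}`: `T`-paths from `a` to `b` whose first two edges are `T_j, T_k`. -/
def TPathsFirst2 (n : ℕ) (T : Triangulation n) (a b : Fin (n + 3))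
    (j k : Fin (2 * n + 3)) : Set (PathData n) :=
  { p ∈ TPathsFirst n T a b j | p.2[1]? = some k }

/-- `𝒫_T(a,b)_{j,-k}`: `T`-paths from `a` to `b` whose first edge is `T_j` and which do
not contain the index `k`. -/
def TPathsFirstAvoid (n : ℕ) (T : Triangulation n) (a b : Fin (n + 3))
    (j k : Fin (2 * n + 3)) : Set (PathData n) :=
  { p ∈ TPathsFirst n T a b j | k ∉ p.2 }

/-- The ambient field `F = ℚ(x_1,…,x_{2n+3})`. -/
abbrev F (n : ℕ) := FractionRing (MvPolynomial (Fin (2 * n + 3)) ℚ)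

/-- The variable `x_i ∈ F` attached to the edge `T_i`. -/
def X (n : ℕ) (i : Fin (2 * n + 3)) : F n :=
  algebraMap (MvPolynomial (Fin (2 * n + 3)) ℚ) (F n) (MvPolynomial.X i)

/-- `x(α)` for a path with edge list `es = [i_1,…,i_ℓ]`: the product of the
variables of the odd edges times the inverse of the product of the variables of
the even edges (list position `k` carries the `(k+1)`-st edge). -/
def pathX (n : ℕ) (es : List (Fin (2 * n + 3))) : F n :=
  (∏ k ∈ (Finset.range es.length).filter (fun k => k % 2 = 0), X n (es.getD k (edef n))) *
  (∏ k ∈ (Finset.range es.length).filter (fun k => k % 2 = 1), X n (es.getD k (edef n)))⁻¹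

end


section Aux

open Real

lemma detA_eq (α β γ : ℝ) :
    (cos β - cos α) * (sin γ - sin α) - (cos γ - cos α) * (sin β - sin α)
      = sin (γ - β) + sin (β - α) - sin (γ - α) := by
  simp only [sin_sub]; ring

lemma sin_tri (u v : ℝ) :
    sin (2*u) + sin (2*v) - sin (2*u + 2*v) = 4 * sin u * sin v * sin (u + v) := by
  simp only [sin_add, cos_add, sin_two_mul, cos_two_mul']
  linear_combination (-2*sin u*cos u) * sin_sq_add_cos_sq v + (-2*sin v*cos v) * sin_sq_add_cos_sq u

lemma detA_pos {α β γ : ℝ} (h1 : α < β) (h2 : β < γ) (h3 : γ - α < 2 * π) :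
    0 < (cos β - cos α) * (sin γ - sin α) - (cos γ - cos α) * (sin β - sin α) := by
  rw [detA_eq]
  have key := sin_tri ((β-α)/2) ((γ-β)/2)
  rw [show 2*((β-α)/2) = β - α from by ring, show 2*((γ-β)/2) = γ - β from by ring] at key
  rw [show γ - α = (β-α) + (γ-β) from by ring]
  rw [show sin (γ-β) + sin (β-α) - sin (β-α + (γ-β)) = sin (β-α) + sin (γ-β) - (sin (β-α+(γ-β))) from by ring, key]
  have p1 : 0 < sin ((β-α)/2) := sin_pos_of_pos_of_lt_pi (by linarith) (by linarith)
  have p2 : 0 < sin ((γ-β)/2) := sin_pos_of_pos_of_lt_pi (by linarith) (by linarith)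
  have p3 : 0 < sin ((β-α)/2 + (γ-β)/2) := sin_pos_of_pos_of_lt_pi (by linarith) (by linarith)
  positivity

/-- signed area form of the triangle `A B C` (twice the area). -/
noncomputable def tri (A B C : EuclideanSpace ℝ (Fin 2)) : ℝ :=
  (B 0 - A 0) * (C 1 - A 1) - (C 0 - A 0) * (B 1 - A 1)

lemma tri_cyc (A B C : EuclideanSpace ℝ (Fin 2)) : tri A B C = tri B C A := by
  simp only [tri]; ring

lemma tri_swap (A B C : EuclideanSpace ℝ (Fin 2)) : tri A B C = - tri A C B := by
  simp only [tri]; ring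

lemma vtx0 (n : ℕ) (k : Fin (n+3)) : vtx n k 0 = Real.cos (2 * Real.pi * k / (n + 3)) := rfl
lemma vtx1 (n : ℕ) (k : Fin (n+3)) : vtx n k 1 = Real.sin (2 * Real.pi * k / (n + 3)) := rfl

/-- angle as a function of a natural number (allows wraparound beyond `n+3`). -/
noncomputable def ang (n : ℕ) (k : ℕ) : ℝ := 2 * Real.pi * k / (n + 3)

lemma ang_lt (n : ℕ) {j k : ℕ} (h : j < k) : ang n j < ang n k := by
  have hpi := Real.pi_pos
  have : (j:ℝ) < k := by exact_mod_cast h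
  unfold ang
  have h3 : (0:ℝ) < (n:ℝ) + 3 := by positivity
  rw [div_lt_div_iff₀ h3 h3]
  have h2 : (0:ℝ) < 2 * Real.pi := by positivity
  nlinarith [mul_lt_mul_of_pos_left this h2]

lemma ang_sub_lt (n : ℕ) {j k : ℕ} (h : k - j < n + 3) (hj : j ≤ k) :
    ang n k - ang n j < 2 * Real.pi := by
  have hpi := Real.pi_pos
  have : (k:ℝ) - j < (n:ℝ) + 3 := by
    have hk : k < j + (n + 3) := by omega
    have : (k:ℝ) < (j:ℝ) + ((n:ℝ)+3) := by exact_mod_cast hk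
    linarith
  unfold ang
  rw [div_sub_div_same]
  have h3 : (0:ℝ) < (n:ℝ) + 3 := by positivity
  rw [div_lt_iff₀ h3]
  nlinarith

lemma tri_pos_ang (n : ℕ) {i j k : ℕ} (hij : i < j) (hjk : j < k) (hki : k - i < n + 3)
    (A B C : EuclideanSpace ℝ (Fin 2))
    (hA : A 0 = Real.cos (ang n i) ∧ A 1 = Real.sin (ang n i))
    (hB : B 0 = Real.cos (ang n j) ∧ B 1 = Real.sin (ang n j))
    (hC : C 0 = Real.cos (ang n k) ∧ C 1 = Real.sin (ang n k)) :
    0 < tri A B C := by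
  unfold tri
  rw [hA.1, hA.2, hB.1, hB.2, hC.1, hC.2]
  exact detA_pos (ang_lt n hij) (ang_lt n hjk) (ang_sub_lt n hki (by omega))

lemma tri_pos (n : ℕ) {i j k : Fin (n+3)} (hij : i.val < j.val) (hjk : j.val < k.val) :
    0 < tri (vtx n i) (vtx n j) (vtx n k) := by
  refine tri_pos_ang n hij hjk (by omega) _ _ _ ⟨rfl, rfl⟩ ⟨rfl, rfl⟩ ⟨rfl, rfl⟩

lemma tri_degen1 (A C : EuclideanSpace ℝ (Fin 2)) : tri A A C = 0 := by simp [tri]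
lemma tri_degen2 (A B : EuclideanSpace ℝ (Fin 2)) : tri A B A = 0 := by simp [tri]
lemma tri_degen3 (A B : EuclideanSpace ℝ (Fin 2)) : tri A B B = 0 := by simp [tri]

lemma tri_ne (n : ℕ) {p q r : Fin (n+3)} (hpq : p ≠ q) (hpr : p ≠ r) (hqr : q ≠ r) :
    tri (vtx n p) (vtx n q) (vtx n r) ≠ 0 := by
  rcases lt_trichotomy p.val q.val with h1 | h1 | h1
  · rcases lt_trichotomy q.val r.val with h2 | h2 | h2
    · exact ne_of_gt (tri_pos n h1 h2)
    · exact absurd (Fin.ext h2) hqr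
    · rcases lt_trichotomy p.val r.val with h3 | h3 | h3
      · -- p < r < q : tri p q r = - tri p r q
        rw [tri_swap]; exact neg_ne_zero.mpr (ne_of_gt (tri_pos n h3 h2))
      · exact absurd (Fin.ext h3) hpr
      · -- r < p < q : tri p q r = tri r p q (cyclic twice)
        rw [tri_cyc, tri_cyc]; exact ne_of_gt (tri_pos n h3 h1)
  · exact absurd (Fin.ext h1) hpq
  · rcases lt_trichotomy p.val r.val with h2 | h2 | h2
    · -- q < p < r : tri p q r = tri q r p? order q<p<r: tri q p r >0; tri p q r = -tri q p r
      rw [tri_cyc, tri_swap]; exact neg_ne_zero.mpr (ne_of_gt (tri_pos n h1 h2))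
    · exact absurd (Fin.ext h2) hpr
    · rcases lt_trichotomy q.val r.val with h3 | h3 | h3
      · -- q < r < p : tri p q r = tri q r p (cyclic)
        rw [tri_cyc]; exact ne_of_gt (tri_pos n h3 h2)
      · exact absurd (Fin.ext h3) hqr
      · -- r < q < p : tri p q r = - tri r q p? order r<q<p: tri r q p > 0; tri p q r = cyc: tri r p q? 
        rw [tri_cyc, tri_cyc, tri_swap]; exact neg_ne_zero.mpr (ne_of_gt (tri_pos n h3 h1))

lemma vtx_inj (n : ℕ) {p q : Fin (n+3)} (hpq : p ≠ q) : vtx n p ≠ vtx n q := by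
  have hp := p.isLt; have hq := q.isLt
  have hex : ∃ r : Fin (n+3), p ≠ r ∧ q ≠ r := by
    refine ⟨⟨if p.val = 0 then (if q.val = 1 then 2 else 1)
      else (if q.val = 0 then (if p.val = 1 then 2 else 1) else 0), by split_ifs <;> omega⟩, ?_, ?_⟩ <;>
      simp only [Fin.ext_iff, ne_eq] <;> split_ifs <;> omega
  obtain ⟨r, hpr, hqr⟩ := hex
  intro hE
  have := tri_ne n hpq hpr hqr
  rw [hE] at this
  exact this (tri_degen1 _ _)

lemma tri_affine (C D X Y : EuclideanSpace ℝ (Fin 2)) {u v : ℝ} (huv : u + v = 1) :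
    tri C D (u • X + v • Y) = u * tri C D X + v * tri C D Y := by
  have h0 : (u • X + v • Y) 0 = u * X 0 + v * Y 0 := rfl
  have h1 : (u • X + v • Y) 1 = u * X 1 + v * Y 1 := rfl
  simp only [tri, h0, h1]
  linear_combination ((D 0 - C 0) * C 1 - (D 1 - C 1) * C 0) * huv

lemma mem_openSegment' {X Y P : EuclideanSpace ℝ (Fin 2)} :
    P ∈ openSegment ℝ X Y ↔ ∃ u v : ℝ, 0 < u ∧ 0 < v ∧ u + v = 1 ∧ u • X + v • Y = P :=
  by simp [openSegment, and_assoc]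

lemma tri_zero_openSegment (C D : EuclideanSpace ℝ (Fin 2)) {P : EuclideanSpace ℝ (Fin 2)}
    (hP : P ∈ openSegment ℝ C D) : tri C D P = 0 := by
  obtain ⟨u, v, hu, hv, huv, rfl⟩ := mem_openSegment'.mp hP
  rw [tri_affine C D C D huv, tri_degen2, tri_degen3]
  ring

lemma norm_one_vtx (n : ℕ) (k : Fin (n+3)) : ‖vtx n k‖ = 1 := by
  rw [EuclideanSpace.norm_eq, Real.sqrt_eq_one]
  simp only [Real.norm_eq_abs, sq_abs, Fin.sum_univ_two, vtx0, vtx1]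
  exact Real.cos_sq_add_sin_sq _

lemma norm_lt_one_openSegment {X Y P : EuclideanSpace ℝ (Fin 2)} (hX : ‖X‖ = 1) (hY : ‖Y‖ = 1)
    (hXY : X ≠ Y) (hP : P ∈ openSegment ℝ X Y) : ‖P‖ < 1 := by
  obtain ⟨u, v, hu, hv, huv, rfl⟩ := mem_openSegment'.mp hP
  have hin : (inner ℝ X Y : ℝ) < 1 := (inner_lt_one_iff_real_of_norm_eq_one hX hY).mpr hXY
  have hsq : ‖u • X + v • Y‖ ^ 2 < 1 := by
    rw [norm_add_sq_real, norm_smul, norm_smul, real_inner_smul_left, real_inner_smul_right,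
      hX, hY]
    simp only [Real.norm_eq_abs, abs_of_pos hu, abs_of_pos hv]
    nlinarith [mul_pos (mul_pos hu hv) (sub_pos.mpr hin)]
  nlinarith [norm_nonneg (u • X + v • Y)]

lemma eq_affine_of_tri_zero {C D P : EuclideanSpace ℝ (Fin 2)} (hCD : C ≠ D)
    (h : tri C D P = 0) : ∃ u : ℝ, P = (1 - u) • C + u • D := by
  have hne : D 0 - C 0 ≠ 0 ∨ D 1 - C 1 ≠ 0 := by
    by_contra hcon
    push_neg at hcon
    apply hCD
    ext i
    fin_cases i <;> [skip; skip] <;>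
      [have := hcon.1; have := hcon.2] <;> (simp at this ⊢; linarith)
  have key : ∀ u : ℝ, P 0 = (1-u) * C 0 + u * D 0 → P 1 = (1-u) * C 1 + u * D 1 →
      P = (1 - u) • C + u • D := by
    intro u h0 h1
    ext i
    fin_cases i
    · simpa using h0
    · simpa using h1
  unfold tri at h
  rcases hne with h0 | h1
  · refine ⟨(P 0 - C 0)/(D 0 - C 0), key _ (by field_simp; ring) ?_⟩
    have hrel : (D 0 - C 0) * (P 1 - C 1) = (P 0 - C 0) * (D 1 - C 1) := by linarith
    field_simp
    nlinarith [hrel]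
  · refine ⟨(P 1 - C 1)/(D 1 - C 1), key _ ?_ (by field_simp; ring)⟩
    have hrel : (D 0 - C 0) * (P 1 - C 1) = (P 0 - C 0) * (D 1 - C 1) := by linarith
    field_simp
    nlinarith [hrel]

lemma mem_open_of_tri_zero {C D P : EuclideanSpace ℝ (Fin 2)} (hC : ‖C‖ = 1) (hD : ‖D‖ = 1)
    (hCD : C ≠ D) (hP : ‖P‖ < 1) (h : tri C D P = 0) : P ∈ openSegment ℝ C D := by
  obtain ⟨u, rfl⟩ := eq_affine_of_tri_zero hCD h
  have hin : (inner ℝ C D : ℝ) < 1 := (inner_lt_one_iff_real_of_norm_eq_one hC hD).mpr hCD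
  have hsq : ‖(1-u) • C + u • D‖ ^ 2 = 1 + 2 * (1 - inner ℝ C D : ℝ) * (u^2 - u) := by
    rw [norm_add_sq_real, norm_smul, norm_smul, real_inner_smul_left, real_inner_smul_right,
      hC, hD]
    simp only [Real.norm_eq_abs, mul_one]
    rw [sq_abs, sq_abs]
    ring
  have hP2 : ‖(1-u) • C + u • D‖ ^ 2 < 1 := by nlinarith [norm_nonneg ((1-u) • C + u • D)]
  rw [hsq] at hP2
  have huu : u^2 - u < 0 := by nlinarith
  have hu0 : 0 < u := by nlinarith [sq_nonneg u]
  have hu1 : u < 1 := by nlinarith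
  exact mem_openSegment'.mpr ⟨1-u, u, by linarith, hu0, by ring, rfl⟩

lemma cross_of_signs {C D X Y : EuclideanSpace ℝ (Fin 2)} (hC : ‖C‖ = 1) (hD : ‖D‖ = 1)
    (hX : ‖X‖ = 1) (hY : ‖Y‖ = 1) (hCD : C ≠ D)
    (htX : 0 < tri C D X) (htY : tri C D Y < 0) :
    (openSegment ℝ C D ∩ openSegment ℝ X Y).Nonempty := by
  have hden : 0 < tri C D X - tri C D Y := by linarith
  have hu : 0 < -(tri C D Y)/(tri C D X - tri C D Y) := div_pos (by linarith) hden
  have hv : 0 < (tri C D X)/(tri C D X - tri C D Y) := div_pos htX hden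
  have hsum : -(tri C D Y)/(tri C D X - tri C D Y) + (tri C D X)/(tri C D X - tri C D Y) = 1 := by
    field_simp
    ring
  have hXY : X ≠ Y := by
    intro hE
    rw [hE] at htX
    linarith
  refine ⟨(-(tri C D Y)/(tri C D X - tri C D Y)) • X + ((tri C D X)/(tri C D X - tri C D Y)) • Y,
    ?_, ?_⟩
  · apply mem_open_of_tri_zero hC hD hCD
    · exact norm_lt_one_openSegment hX hY hXY (mem_openSegment'.mpr ⟨_, _, hu, hv, hsum, rfl⟩)
    · rw [tri_affine C D X Y hsum]
      field_simp
      ring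
  · exact mem_openSegment'.mpr ⟨_, _, hu, hv, hsum, rfl⟩

lemma cross_of_opp {C D X Y : EuclideanSpace ℝ (Fin 2)} (hC : ‖C‖ = 1) (hD : ‖D‖ = 1)
    (hX : ‖X‖ = 1) (hY : ‖Y‖ = 1) (hCD : C ≠ D)
    (h : tri C D X * tri C D Y < 0) :
    (openSegment ℝ C D ∩ openSegment ℝ X Y).Nonempty := by
  rcases lt_trichotomy (tri C D X) 0 with hx | hx | hx
  · have hy : 0 < tri C D Y := by nlinarith
    obtain ⟨P, h1, h2⟩ := cross_of_signs hC hD hY hX hCD hy hx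
    exact ⟨P, h1, by rwa [openSegment_symm]⟩
  · rw [hx] at h; simp at h
  · exact cross_of_signs hC hD hX hY hCD hx (by nlinarith)

lemma no_cross_shared (n : ℕ) {p q r : Fin (n+3)} (hpq : p ≠ q) (hpr : p ≠ r) (hqr : q ≠ r)
    {x : EuclideanSpace ℝ (Fin 2)} (h1 : x ∈ openSegment ℝ (vtx n p) (vtx n q))
    (h2 : x ∈ openSegment ℝ (vtx n p) (vtx n r)) : False := by
  have ht : tri (vtx n p) (vtx n q) x = 0 := tri_zero_openSegment _ _ h1
  obtain ⟨u, v, hu, hv, huv, rfl⟩ := mem_openSegment'.mp h2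
  rw [tri_affine _ _ _ _ huv, tri_degen2] at ht
  have := tri_ne n hpq hpr hqr
  have hv0 : v * tri (vtx n p) (vtx n q) (vtx n r) = 0 := by linarith
  rcases mul_eq_zero.mp hv0 with h | h
  · linarith
  · exact this h

lemma adj_side (n : ℕ) {u v w : Fin (n+3)} (huv : (u.val + 1) % (n + 3) = v.val)
    (hwu : w ≠ u) (hwv : w ≠ v) : 0 < tri (vtx n u) (vtx n v) (vtx n w) := by
  have hu := u.isLt; have hv := v.isLt; have hw := w.isLt
  have hwu' : w.val ≠ u.val := fun h => hwu (Fin.ext h)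
  have hwv' : w.val ≠ v.val := fun h => hwv (Fin.ext h)
  by_cases hcase : u.val + 1 < n + 3
  · have hveq : v.val = u.val + 1 := by rw [← huv, Nat.mod_eq_of_lt hcase]
    rcases lt_trichotomy w.val u.val with h | h | h
    · rw [tri_cyc, tri_cyc]
      exact tri_pos n h (by omega)
    · exact absurd h hwu'
    · exact tri_pos n (by omega) (by omega)
  · have hueq : u.val = n + 2 := by omega
    have hveq : v.val = 0 := by
      rw [← huv, show u.val + 1 = n + 3 from by omega, Nat.mod_self]
    rw [tri_cyc]
    exact tri_pos n (by omega) (by omega)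

lemma adj_ne_of_mod (n : ℕ) {u v : Fin (n+3)} (hor : (u.val + 1) % (n + 3) = v.val) : u ≠ v := by
  intro h
  subst h
  have := u.isLt
  rcases Nat.lt_or_ge (u.val + 1) (n+3) with h' | h'
  · rw [Nat.mod_eq_of_lt h'] at hor; omega
  · have h3 : u.val + 1 = n + 3 := by omega
    rw [h3, Nat.mod_self] at hor; omega

lemma no_bdry_cross (n : ℕ) {u v a b : Fin (n+3)} (hor : (u.val + 1) % (n + 3) = v.val)
    (hab : a ≠ b)
    (hnadj1 : ¬ ((a.val + 1) % (n + 3) = b.val)) (hnadj2 : ¬ ((b.val + 1) % (n + 3) = a.val))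
    {x : EuclideanSpace ℝ (Fin 2)} (h1 : x ∈ openSegment ℝ (vtx n u) (vtx n v))
    (h2 : x ∈ openSegment ℝ (vtx n a) (vtx n b)) : False := by
  have huv : u ≠ v := adj_ne_of_mod n hor
  by_cases hau : a = u
  · subst hau
    have hbv : b ≠ v := fun h => hnadj1 (h ▸ hor)
    exact no_cross_shared n huv hab (Ne.symm hbv) h1 h2
  · by_cases hav : a = v
    · subst hav
      rw [openSegment_symm] at h1
      have hbu : b ≠ u := fun h => hnadj2 (by rw [h]; exact hor)
      exact no_cross_shared n (Ne.symm huv) hab (Ne.symm hbu) h1 h2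
    · by_cases hbu : b = u
      · subst hbu
        rw [openSegment_symm] at h2
        exact no_cross_shared n huv (Ne.symm hau) (Ne.symm hav) h1 h2
      · by_cases hbv : b = v
        · subst hbv
          rw [openSegment_symm] at h1 h2
          exact no_cross_shared n (Ne.symm huv) (Ne.symm hav) (Ne.symm hau) h1 h2
        · have ta := adj_side n hor hau hav
          have tb := adj_side n hor hbu hbv
          have ht : tri (vtx n u) (vtx n v) x = 0 := tri_zero_openSegment _ _ h1
          obtain ⟨α, β, hα, hβ, hαβ, rfl⟩ := mem_openSegment'.mp h2
          rw [tri_affine _ _ _ _ hαβ] at ht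
          nlinarith

-- Combinatorial helpers

lemma adj_ne {n : ℕ} {u v : Fin (n+3)} (h : Adj n u v) : u ≠ v := by
  rcases h with h | h
  · exact adj_ne_of_mod n h
  · exact (adj_ne_of_mod n h).symm

lemma src_ne_tgt (n : ℕ) (T : Triangulation n) (i : Fin (2*n+3)) : T.src i ≠ T.tgt i := by
  by_cases h : i.val < n
  · exact (T.diag i h).1
  · exact adj_ne (T.bdry i (le_of_not_gt h))

lemma joins_ne {n : ℕ} {T : Triangulation n} {i : Fin (2*n+3)} {u v : Fin (n+3)}
    (h : Joins n T i u v) : u ≠ v := by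
  have := src_ne_tgt n T i
  rcases h with ⟨h1, h2⟩ | ⟨h1, h2⟩
  · rw [h1, h2] at this; exact this
  · rw [h1, h2] at this; exact this.symm

lemma joins_symm {n : ℕ} {T : Triangulation n} {i : Fin (2*n+3)} {u v : Fin (n+3)}
    (h : Joins n T i u v) : Joins n T i v u := by
  rcases h with ⟨h1, h2⟩ | ⟨h1, h2⟩
  · exact Or.inr ⟨h1, h2⟩
  · exact Or.inl ⟨h1, h2⟩

lemma joins_seg {n : ℕ} {T : Triangulation n} {i : Fin (2*n+3)} {u v : Fin (n+3)}
    (h : Joins n T i u v) :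
    openSegment ℝ (vtx n (T.src i)) (vtx n (T.tgt i)) = openSegment ℝ (vtx n u) (vtx n v) := by
  rcases h with ⟨h1, h2⟩ | ⟨h1, h2⟩
  · rw [h1, h2]
  · rw [h1, h2, openSegment_symm]

lemma joins_unique {n : ℕ} {T : Triangulation n} {i j : Fin (2*n+3)} {u v : Fin (n+3)}
    (h1 : Joins n T i u v) (h2 : Joins n T j u v) : i = j := by
  apply T.inj
  rcases h1 with ⟨ha, hb⟩ | ⟨ha, hb⟩ <;> rcases h2 with ⟨hc, hd⟩ | ⟨hc, hd⟩ <;>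
    [exact Or.inl ⟨ha.trans hc.symm, hb.trans hd.symm⟩;
     exact Or.inr ⟨ha.trans hd.symm, hb.trans hc.symm⟩;
     exact Or.inr ⟨ha.trans hd.symm, hb.trans hc.symm⟩;
     exact Or.inl ⟨ha.trans hc.symm, hb.trans hd.symm⟩]

lemma joins_pair {n : ℕ} {T : Triangulation n} {i : Fin (2*n+3)} {u v w z : Fin (n+3)}
    (h1 : Joins n T i u v) (h2 : Joins n T i w z) : (u = w ∧ v = z) ∨ (u = z ∧ v = w) := by
  rcases h1 with ⟨ha, hb⟩ | ⟨ha, hb⟩ <;> rcases h2 with ⟨hc, hd⟩ | ⟨hc, hd⟩ <;>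
    [exact Or.inl ⟨ha.symm.trans hc, hb.symm.trans hd⟩;
     exact Or.inr ⟨ha.symm.trans hc, hb.symm.trans hd⟩;
     exact Or.inr ⟨hb.symm.trans hd, ha.symm.trans hc⟩;
     exact Or.inl ⟨hb.symm.trans hd, ha.symm.trans hc⟩]

lemma getD_zero_of_head? {α : Type*} {l : List α} {a : α} (h : l.head? = some a) (d : α) :
    l.getD 0 d = a := by
  cases l with
  | nil => simp at h
  | cons x t =>
    simp only [List.head?_cons, Option.some.injEq] at h
    simp [h]

lemma head?_eq_getD {α : Type*} {l : List α} (h : l ≠ []) (d : α) :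
    l.head? = some (l.getD 0 d) := by
  cases l with
  | nil => exact absurd rfl h
  | cons x t => rfl

end Aux

lemma dist_comb {A B x : EuclideanSpace ℝ (Fin 2)} {u v : ℝ} (huv : u + v = 1) (hv : 0 < v)
    (hx : u • A + v • B = x) : dist A x = v * dist A B := by
  rw [← hx, dist_eq_norm, dist_eq_norm]
  have hu : u = 1 - v := by linarith
  subst hu
  have h : A - ((1 - v) • A + v • B) = v • (A - B) := by
    rw [sub_smul, one_smul, smul_sub]
    abel
  rw [h, norm_smul, Real.norm_eq_abs, abs_of_pos hv]

lemma key_claim (n : ℕ) (T : Triangulation n) (a b c d w z : Fin (n + 3))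
    (i0 j k : Fin (2 * n + 3))
    (hab : a ≠ b)
    (hM : ¬ ∃ i : Fin (2 * n + 3), Joins n T i a b)
    (hnadj1 : ¬ ((a.val + 1) % (n + 3) = b.val))
    (hnadj2 : ¬ ((b.val + 1) % (n + 3) = a.val))
    (hi0M : ECross n T i0 a b)
    (hclosest : ∀ j : Fin (2 * n + 3), j.val < n → ECross n T j a b → j ≠ i0 →
      ∀ x ∈ crossPts n T i0 a b, ∀ y ∈ crossPts n T j a b,
        dist (vtx n a) x < dist (vtx n a) y)
    (hcd : Joins n T i0 c d)
    (hj : Joins n T j a w)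
    (hk : Joins n T k w z)
    (hkX : ECross n T k a b) : w = c ∨ w = d := by
  by_contra hcon
  push_neg at hcon
  obtain ⟨hwc, hwd⟩ := hcon
  obtain ⟨x0, hx0e, hx0M⟩ := hi0M
  have hcdne : c ≠ d := joins_ne hcd
  have hx0CD : x0 ∈ openSegment ℝ (vtx n c) (vtx n d) := by
    rw [← joins_seg hcd]; exact hx0e
  have hac : a ≠ c := by
    rintro rfl
    have hdb : d ≠ b := by rintro rfl; exact hM ⟨i0, hcd⟩
    exact no_cross_shared n hcdne hab hdb hx0CD hx0M
  have had : a ≠ d := by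
    rintro rfl
    have hcb : c ≠ b := by rintro rfl; exact hM ⟨i0, joins_symm hcd⟩
    rw [openSegment_symm] at hx0CD
    exact no_cross_shared n (Ne.symm hcdne) hab hcb hx0CD hx0M
  have nA : ‖vtx n a‖ = 1 := norm_one_vtx n a
  have nC : ‖vtx n c‖ = 1 := norm_one_vtx n c
  have nD : ‖vtx n d‖ = 1 := norm_one_vtx n d
  have nW : ‖vtx n w‖ = 1 := norm_one_vtx n w
  have nZ : ‖vtx n z‖ = 1 := norm_one_vtx n z
  have hCDpts : vtx n c ≠ vtx n d := vtx_inj n hcdne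
  obtain ⟨u0, v0, hu0, hv0, huv0, hx0eq⟩ := mem_openSegment'.mp hx0M
  have ht0 : tri (vtx n c) (vtx n d) x0 = 0 := tri_zero_openSegment _ _ hx0CD
  have haff0 : tri (vtx n c) (vtx n d) x0
      = u0 * tri (vtx n c) (vtx n d) (vtx n a) + v0 * tri (vtx n c) (vtx n d) (vtx n b) := by
    rw [← hx0eq, tri_affine _ _ _ _ huv0]
  set s := tri (vtx n c) (vtx n d) (vtx n a) with hs_def
  set tB := tri (vtx n c) (vtx n d) (vtx n b) with htB_def
  set tW := tri (vtx n c) (vtx n d) (vtx n w) with htW_def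
  have hs : s ≠ 0 := by rw [hs_def]; exact tri_ne n hcdne (Ne.symm hac) (Ne.symm had)
  have htWne : tW ≠ 0 := by rw [htW_def]; exact tri_ne n hcdne (Ne.symm hwc) (Ne.symm hwd)
  clear_value s tB tW
  have h0 : u0 * s + v0 * tB = 0 := by rw [haff0] at ht0; linarith
  have hs2 : 0 < s * s := mul_self_pos.mpr hs
  have e0 : u0 * (s * s) + v0 * (s * tB) = 0 := by linear_combination s * h0
  have hsB : s * tB < 0 := by nlinarith [mul_pos hu0 hs2]
  rcases lt_trichotomy (s * tW) 0 with hneg | hzero | hpos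
  · -- edge j would cross the diagonal cd
    have hji0 : j ≠ i0 := by
      rintro rfl
      rcases joins_pair hj hcd with ⟨h1, _⟩ | ⟨h1, _⟩
      · exact hac h1
      · exact had h1
    have hcross := cross_of_opp nC nD nA nW hCDpts (by rw [← hs_def, ← htW_def]; exact hneg)
    refine T.noncross j i0 hji0 ?_
    unfold Cross
    rw [joins_seg hj, joins_seg hcd, Set.inter_comm]
    exact hcross
  · rcases mul_eq_zero.mp hzero with h | h
    · exact absurd h hs
    · exact htWne h
  · -- edge k would cross the diagonal cd
    obtain ⟨x2, hx2e, hx2M⟩ := hkX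
    have hkn : k.val < n := by
      by_contra hkn
      rcases T.bdry k (le_of_not_gt hkn) with hor | hor
      · exact no_bdry_cross n hor hab hnadj1 hnadj2 hx2e hx2M
      · rw [openSegment_symm] at hx2e
        exact no_bdry_cross n hor hab hnadj1 hnadj2 hx2e hx2M
    have hki0 : k ≠ i0 := by
      rintro rfl
      rcases joins_pair hk hcd with ⟨h1, _⟩ | ⟨h1, _⟩
      · exact hwc h1
      · exact hwd h1
    have hdlt := hclosest k hkn ⟨x2, hx2e, hx2M⟩ hki0 x0 ⟨hx0e, hx0M⟩ x2 ⟨hx2e, hx2M⟩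
    obtain ⟨u2, v2, hu2, hv2, huv2, hx2eq⟩ := mem_openSegment'.mp hx2M
    have hdAB : 0 < dist (vtx n a) (vtx n b) := dist_pos.mpr (vtx_inj n hab)
    have hd0 : dist (vtx n a) x0 = v0 * dist (vtx n a) (vtx n b) := dist_comb huv0 hv0 hx0eq
    have hd2 : dist (vtx n a) x2 = v2 * dist (vtx n a) (vtx n b) := dist_comb huv2 hv2 hx2eq
    have hv02 : v0 < v2 := by
      rw [hd0, hd2] at hdlt
      exact (mul_lt_mul_iff_of_pos_right hdAB).mp hdlt
    have haff2 : tri (vtx n c) (vtx n d) x2 = u2 * s + v2 * tB := by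
      rw [← hx2eq, tri_affine _ _ _ _ huv2, ← hs_def, ← htB_def]
    have hu0e : u0 = 1 - v0 := by linarith
    have hu2e : u2 = 1 - v2 := by linarith
    subst hu0e hu2e
    have hx2neg : s * tri (vtx n c) (vtx n d) x2 < 0 := by
      rw [haff2]
      nlinarith [e0, mul_pos (sub_pos.mpr hv02) (sub_pos.mpr (show s * tB < s * s from by linarith))]
    have hx2WZ : x2 ∈ openSegment ℝ (vtx n w) (vtx n z) := by
      rw [← joins_seg hk]; exact hx2e
    obtain ⟨p, q, hp, hq, hpq, hx2eq2⟩ := mem_openSegment'.mp hx2WZ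
    obtain ⟨tZ, htZ_def⟩ : ∃ tZ, tri (vtx n c) (vtx n d) (vtx n z) = tZ := ⟨_, rfl⟩
    have haffWZ : tri (vtx n c) (vtx n d) x2 = p * tW + q * tZ := by
      rw [← hx2eq2, tri_affine _ _ _ _ hpq, ← htW_def, htZ_def]
    rw [haffWZ] at hx2neg
    have hsZ : s * tZ < 0 := by nlinarith [mul_pos hp hpos]
    have hWZ : tW * tZ < 0 := by
      have h1 : (s * tW) * (s * tZ) < 0 := mul_neg_of_pos_of_neg hpos hsZ
      have h2 : (s * s) * (tW * tZ) = (s * tW) * (s * tZ) := by ring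
      by_contra hcon2
      push_neg at hcon2
      have h3 : 0 ≤ (s * s) * (tW * tZ) := mul_nonneg hs2.le hcon2
      linarith
    have hcross := cross_of_opp nC nD nW nZ hCDpts (by rw [← htW_def, htZ_def]; exact hWZ)
    refine T.noncross k i0 hki0 ?_
    unfold Cross
    rw [joins_seg hk, joins_seg hcd, Set.inter_comm]
    exact hcross


/-- Lemma 2.4. -/
theorem TPaths_eq_union_first_i1_i1'
    (n : ℕ) (hn : 1 ≤ n) (T : Triangulation n) (a b c d : Fin (n + 3))
    (i0 i1 i1' : Fin (2 * n + 3))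
    (hab : a ≠ b) (hnadj : ¬ Adj n a b)
    (hM : ¬ ∃ i : Fin (2 * n + 3), Joins n T i a b)
    (hi0d : i0.val < n) (hi0M : ECross n T i0 a b)
    (hclosest : ∀ j : Fin (2 * n + 3), j.val < n → ECross n T j a b → j ≠ i0 →
      ∀ x ∈ crossPts n T i0 a b, ∀ y ∈ crossPts n T j a b,
        dist (vtx n a) x < dist (vtx n a) y)
    (hcd : Joins n T i0 c d)
    (hi1' : Joins n T i1' a c) (hi1 : Joins n T i1 a d)
    :
    TPaths n T a b = TPathsFirst n T a b i1 ∪ TPathsFirst n T a b i1' ∧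
    Disjoint (TPathsFirst n T a b i1) (TPathsFirst n T a b i1') := by
  have hcdne : c ≠ d := joins_ne hcd
  have hnadj1 : ¬ ((a.val + 1) % (n + 3) = b.val) := fun h => hnadj (Or.inl h)
  have hnadj2 : ¬ ((b.val + 1) % (n + 3) = a.val) := fun h => hnadj (Or.inr h)
  constructor
  · ext pp
    constructor
    · intro hp
      have hp' := hp
      obtain ⟨hlen, hhead, hlast, hT2, hnodup, hodd, hT5, hT6⟩ := hp'
      have hepos : 0 < pp.2.length := hodd.pos
      have hene : pp.2 ≠ [] := List.ne_nil_of_length_pos hepos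
      have hhead2 : pp.2.head? = some (pp.2.getD 0 (edef n)) := head?_eq_getD hene _
      have hv0 : pp.1.getD 0 a = a := getD_zero_of_head? hhead a
      have hj0 := hT2 0 hepos
      rw [hv0] at hj0
      rcases Nat.lt_or_ge pp.2.length 2 with hl | hl
      · exfalso
        have hl1 : pp.2.length = 1 := by
          rcases hodd with ⟨m, hm⟩; omega
        have hvlen : pp.1.length = 2 := by rw [hlen, hl1]
        obtain ⟨x, y, hxy⟩ := List.length_eq_two.mp hvlen
        have hyb : pp.1.getD 1 a = b := by
          rw [hxy] at hlast ⊢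
          simp only [List.getLast?] at hlast
          simp at hlast ⊢
          exact hlast
        rw [hyb] at hj0
        exact hM ⟨_, hj0⟩
      · have hkJ := hT2 1 hl
        have hkX := hT5 1 hl rfl
        have hw := key_claim n T a b c d (pp.1.getD 1 a) (pp.1.getD 2 a) i0
          (pp.2.getD 0 (edef n)) (pp.2.getD 1 (edef n)) hab hM hnadj1 hnadj2 hi0M hclosest
          hcd hj0 hkJ hkX
        rcases hw with hwc | hwd
        · right
          refine ⟨hp, ?_⟩
          rw [hhead2]
          congr 1
          exact joins_unique (hwc ▸ hj0) hi1'
        · left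
          refine ⟨hp, ?_⟩
          rw [hhead2]
          congr 1
          exact joins_unique (hwd ▸ hj0) hi1
    · rintro (⟨hp, _⟩ | ⟨hp, _⟩) <;> exact hp
  · rw [Set.disjoint_left]
    rintro pp ⟨hp1, hh1⟩ ⟨hp2, hh2⟩
    rw [hh1] at hh2
    have h11 : i1 = i1' := Option.some.inj hh2
    rcases joins_pair hi1 (h11 ▸ hi1') with ⟨h1, h2⟩ | ⟨h1, h2⟩
    · exact hcdne h2.symm
    · exact hcdne (h1.symm.trans h2.symm)
end

section
/- Let a and b be non-adjacent vertices of P and suppose the diagonal joining a and b belongs to T, say it is T_i. Then 𝒫_T(a,b) contains exactly one element, namely the one-edge path (a, b | i); consequently ∑_{α ∈ 𝒫_T(a,b)} x(α) = x_i. (Base case of the induction in the proof of Theorem 1.) -/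
open scoped BigOperators Classical

/-- Any edge of a triangulation has distinct endpoints. -/
lemma joins_ne_aux (n : ℕ) (T : Triangulation n) (j : Fin (2 * n + 3)) (u v : Fin (n + 3))
    (h : Joins n T j u v) : u ≠ v := by
  intro heq
  subst heq
  have hst : T.src j = T.tgt j := by
    rcases h with ⟨h1, h2⟩ | ⟨h1, h2⟩ <;> rw [h1, h2]
  rcases Nat.lt_or_ge j.val n with hj | hj
  · exact (T.diag j hj).1 hst
  · have hadj := T.bdry j hj
    rw [hst] at hadj
    set w := T.tgt j
    have hw : w.val < n + 3 := w.isLt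
    have hm : (w.val + 1) % (n + 3) = w.val := by
      rcases hadj with h | h <;> exact h
    rcases Nat.lt_or_ge (w.val + 1) (n + 3) with hlt | hge
    · rw [Nat.mod_eq_of_lt hlt] at hm; omega
    · have heq2 : w.val + 1 = n + 3 := by omega
      rw [heq2, Nat.mod_self] at hm
      omega

/-- Only one edge joins a given pair of vertices. -/
lemma joins_unique_aux (n : ℕ) (T : Triangulation n) (a b : Fin (n + 3))
    (i j : Fin (2 * n + 3)) (hi : Joins n T i a b) (hj : Joins n T j a b) : j = i := by
  apply T.inj
  rcases hi with ⟨h1, h2⟩ | ⟨h1, h2⟩ <;> rcases hj with ⟨h3, h4⟩ | ⟨h3, h4⟩ <;>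
    simp [SamePair, h1, h2, h3, h4]

/-- An edge crossing the open segment `ab` must equal the edge `T_i` joining `a,b`. -/
lemma cross_eq_aux (n : ℕ) (T : Triangulation n) (a b : Fin (n + 3))
    (i : Fin (2 * n + 3)) (hi : Joins n T i a b)
    (j : Fin (2 * n + 3)) (hj : ECross n T j a b) : j = i := by
  by_contra hne
  apply T.noncross j i hne
  have hseg : openSegment ℝ (vtx n a) (vtx n b)
      = openSegment ℝ (vtx n (T.src i)) (vtx n (T.tgt i)) := by
    rcases hi with ⟨h1, h2⟩ | ⟨h1, h2⟩
    · rw [h1, h2]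
    · rw [h1, h2, openSegment_symm]
  unfold ECross Cross at hj
  rw [hseg] at hj
  exact hj

/-- base case of the induction in the proof of Theorem 1. -/
theorem TPaths_of_mem_triangulation
    (n : ℕ) (hn : 1 ≤ n) (T : Triangulation n) (a b : Fin (n + 3))
    (hab : a ≠ b) (hnadj : ¬ Adj n a b)
    (i : Fin (2 * n + 3)) (hi : Joins n T i a b) :
    TPaths n T a b = {(([a, b], [i]) : PathData n)} ∧
    (∑ᶠ α ∈ TPaths n T a b, pathX n α.2) = X n i := by
  have hset : TPaths n T a b = {(([a, b], [i]) : PathData n)} := by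
    ext p
    obtain ⟨vs, es⟩ := p
    constructor
    · rintro ⟨hlen, hhead, hlast, hT2, hnd, hodd, hT5, hT6⟩
      dsimp only at hlen hhead hlast hT2 hnd hodd hT5 hT6
      simp only [Set.mem_singleton_iff, Prod.mk.injEq]
      rcases Nat.lt_or_ge es.length 2 with h2 | h2
      · -- length = 1
        have h1 : es.length = 1 := by
          obtain ⟨m, hm⟩ := hodd; omega
        obtain ⟨e, he⟩ := List.length_eq_one_iff.mp h1
        have h2v : vs.length = 2 := by omega
        obtain ⟨u, v, huv⟩ := List.length_eq_two.mp h2v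
        subst he huv
        have hu : u = a := by simpa using hhead
        have hv : v = b := by
          simp only [List.getLast?, List.getLast] at hlast
          simpa using hlast
        have hj := hT2 0 (by simp)
        simp only [List.getD_cons_zero, List.getD_cons_succ] at hj
        rw [hu, hv] at hj
        exact ⟨by rw [hu, hv], by rw [joins_unique_aux n T a b i e hi hj]⟩
      · -- length ≥ 2; since odd, length ≥ 3
        exfalso
        have h3 : 3 ≤ es.length := by obtain ⟨m, hm⟩ := hodd; omega
        have hE1 : es.getD 1 (edef n) = i :=
          cross_eq_aux n T a b i hi _ (hT5 1 (by omega) rfl)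
        rcases Nat.lt_or_ge es.length 4 with h4 | h4
        · -- length = 3
          have h3' : es.length = 3 := by omega
          have h4v : vs.length = 4 := by omega
          rcases es with _ | ⟨e0, _ | ⟨e1, _ | ⟨e2, _ | ⟨e3, es⟩⟩⟩⟩ <;> simp at h3'
          rcases vs with _ | ⟨v0, _ | ⟨v1, _ | ⟨v2, _ | ⟨v3, _ | ⟨v4, vs⟩⟩⟩⟩⟩ <;> simp at h4v
          have hv0 : v0 = a := by simpa using hhead
          have hv3 : v3 = b := by
            simp only [List.getLast?, List.getLast] at hlast
            simpa using hlast
          simp only [List.getD_cons_zero, List.getD_cons_succ] at hE1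
          have hj1 := hT2 1 (by simp)
          simp only [List.getD_cons_zero, List.getD_cons_succ] at hj1
          rw [hE1] at hj1
          -- hj1 : Joins n T i v1 v2
          have hcase : (v1 = a ∧ v2 = b) ∨ (v1 = b ∧ v2 = a) := by
            rcases hi with ⟨h1, h2⟩ | ⟨h1, h2⟩ <;>
              rcases hj1 with ⟨h3, h4⟩ | ⟨h3, h4⟩ <;>
              [left; right; right; left] <;>
              constructor <;> first
                | (rw [← h3, h1]) | (rw [← h4, h2]) | (rw [← h3, h2]) | (rw [← h4, h1])
          have hj0 := hT2 0 (by simp)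
          simp only [List.getD_cons_zero, List.getD_cons_succ] at hj0
          rw [hv0] at hj0
          -- hj0 : Joins n T e0 a v1
          rcases hcase with ⟨hv1, hv2⟩ | ⟨hv1, hv2⟩
          · rw [hv1] at hj0
            exact joins_ne_aux n T e0 a a hj0 rfl
          · rw [hv1] at hj0
            have he0 := joins_unique_aux n T a b i e0 hi hj0
            rw [hE1, he0] at hnd
            simp at hnd
        · -- length ≥ 5
          have h5 : 5 ≤ es.length := by obtain ⟨m, hm⟩ := hodd; omega
          have hE3 : es.getD 3 (edef n) = i :=
            cross_eq_aux n T a b i hi _ (hT5 3 (by omega) rfl)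
          rw [List.getD_eq_getElem _ _ (by omega : 1 < es.length)] at hE1
          rw [List.getD_eq_getElem _ _ (by omega : 3 < es.length)] at hE3
          have h13 : (1 : ℕ) = 3 :=
            (hnd.getElem_inj_iff (hi := by omega) (hj := by omega)).mp
              (hE1.trans hE3.symm)
          omega
    · rintro h
      simp only [Set.mem_singleton_iff] at h
      rw [Prod.ext_iff] at h
      obtain ⟨h1, h2⟩ := h
      simp only at h1 h2
      subst h1 h2
      refine ⟨by simp, by simp, by simp, ?_, by simp, ⟨0, by simp⟩, ?_, ?_⟩
      · intro k hk
        simp only [List.length_cons, List.length_nil] at hk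
        interval_cases k
        simpa [List.getD] using hi
      · intro k hk hk2
        simp only [List.length_cons, List.length_nil] at hk
        omega
      · intro j k hj hk
        simp only [List.length_cons, List.length_nil] at hk
        omega
  refine ⟨hset, ?_⟩
  rw [hset, finsum_mem_singleton]
  simp [pathX, Finset.range_one, Finset.filter_singleton]
end

section
/- Let a and b be non-adjacent vertices of P and suppose the segment M = M_{a,b} is not an edge of T. Then the set of diagonals of T crossing M is nonempty, and it contains a unique diagonal T_{i_0} whose crossing point with M is strictly closer to a (in Euclidean distance) than the crossing point with M of every other diagonal of T crossing M. -/
open scoped BigOperators Classical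

lemma tri_aux (P Q : Set ℝ) (hP : Convex ℝ P) (hQ : Convex ℝ Q)
    (hPQ : ∀ x ∈ P, x ∉ Q) {x0 y0 : ℝ} (hx0 : x0 ∈ P) (hy0 : y0 ∈ Q) (h : x0 < y0) :
    ∀ x ∈ P, ∀ y ∈ Q, x < y := by
  intro x hx y hy
  by_contra hcon
  push_neg at hcon
  rcases le_or_gt y x0 with h1 | h1
  · exact hPQ x0 hx0 (hQ.ordConnected.out hy hy0 ⟨h1, h.le⟩)
  · exact hPQ y (hP.ordConnected.out hx0 hx ⟨h1.le, hcon⟩) hy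

lemma tri_s13 (P Q : Set ℝ) (hP : Convex ℝ P) (hQ : Convex ℝ Q)
    (hPQ : ∀ x ∈ P, x ∉ Q) (hPne : P.Nonempty) (hQne : Q.Nonempty) :
    (∀ x ∈ P, ∀ y ∈ Q, x < y) ∨ (∀ x ∈ P, ∀ y ∈ Q, y < x) := by
  obtain ⟨x0, hx0⟩ := hPne
  obtain ⟨y0, hy0⟩ := hQne
  rcases lt_trichotomy x0 y0 with h | h | h
  · exact Or.inl (tri_aux P Q hP hQ hPQ hx0 hy0 h)
  · exact absurd (h ▸ hy0) (hPQ x0 hx0)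
  · exact Or.inr fun x hx y hy => tri_aux Q P hQ hP (fun y hy hyP => hPQ y hyP hy) hy0 hx0 h y hy x hx

lemma mem_seg_param {E : Type*} [AddCommGroup E] [Module ℝ E] (A v : E) {t1 t t2 : ℝ}
    (h1 : t1 ≤ t) (h2 : t ≤ t2) :
    A + t • v ∈ segment ℝ (A + t1 • v) (A + t2 • v) := by
  rcases eq_or_lt_of_le (h1.trans h2) with he | hlt
  · have ht : t = t1 := le_antisymm (he ▸ h2) h1
    rw [ht, he]
    exact left_mem_segment ℝ _ _
  · have h0 : t2 - t1 ≠ 0 := sub_ne_zero.mpr hlt.ne'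
    refine ⟨(t2 - t) / (t2 - t1), (t - t1) / (t2 - t1), div_nonneg (by linarith) (by linarith), div_nonneg (by linarith) (by linarith), ?_, ?_⟩
    · field_simp
      ring
    · match_scalars <;> field_simp <;> ring

lemma vtx_inj_s13 (n : ℕ) : Function.Injective (vtx n) := by
  intro j k h
  have h' := congrArg (WithLp.equiv 2 (Fin 2 → ℝ)) h
  simp only [vtx, Equiv.apply_symm_apply] at h'
  have hcos : Real.cos (2 * Real.pi * j / (n + 3)) = Real.cos (2 * Real.pi * k / (n + 3)) := by
    have := congrFun h' 0; simpa using this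
  have hsin : Real.sin (2 * Real.pi * j / (n + 3)) = Real.sin (2 * Real.pi * k / (n + 3)) := by
    have := congrFun h' 1; simpa using this
  set θ1 := 2 * Real.pi * j / (n + 3) with hθ1
  set θ2 := 2 * Real.pi * k / (n + 3) with hθ2
  have hexp : Complex.exp (θ1 * Complex.I) = Complex.exp (θ2 * Complex.I) := by
    rw [Complex.exp_mul_I, Complex.exp_mul_I, ← Complex.ofReal_cos, ← Complex.ofReal_sin,
      ← Complex.ofReal_cos, ← Complex.ofReal_sin, hcos, hsin]
  rw [Complex.exp_eq_exp_iff_exists_int] at hexp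
  obtain ⟨m, hm⟩ := hexp
  have h2 : (θ1 : ℂ) = θ2 + (m : ℂ) * (2 * Real.pi) := by
    have hsq : (Complex.I)^2 = -1 := Complex.I_sq
    linear_combination (-Complex.I) * hm + ((θ1:ℂ) - θ2 - m * (2*Real.pi)) * hsq
  have h3 : θ1 = θ2 + (m : ℝ) * (2 * Real.pi) := by exact_mod_cast h2
  have hpi := Real.pi_pos
  have hb1 : (0:ℝ) ≤ θ1 ∧ θ1 < 2 * Real.pi := by
    constructor
    · positivity
    · rw [hθ1, div_lt_iff₀ (by positivity)]
      have : (j : ℝ) < (n : ℝ) + 3 := by exact_mod_cast j.isLt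
      nlinarith
  have hb2 : (0:ℝ) ≤ θ2 ∧ θ2 < 2 * Real.pi := by
    constructor
    · positivity
    · rw [hθ2, div_lt_iff₀ (by positivity)]
      have : (k : ℝ) < (n : ℝ) + 3 := by exact_mod_cast k.isLt
      nlinarith
  have hm0 : m = 0 := by
    have h4 : -1 < (m:ℝ) := by nlinarith [hb1.1, hb1.2, hb2.1, hb2.2]
    have h5 : (m:ℝ) < 1 := by nlinarith [hb1.1, hb1.2, hb2.1, hb2.2]
    exact_mod_cast by
      have : -1 < m := by exact_mod_cast h4
      have : m < 1 := by exact_mod_cast h5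
      omega
  rw [hm0] at h3
  simp at h3
  rw [hθ1, hθ2] at h3
  field_simp at h3

  exact Fin.ext (by exact_mod_cast h3)

set_option maxHeartbeats 1000000 in
/-- existence and uniqueness of the closest crossing diagonal `T_{i_0}`. -/
theorem exists_unique_closest_crossing_diagonal
    (n : ℕ) (hn : 1 ≤ n) (T : Triangulation n) (a b : Fin (n + 3))
    (hab : a ≠ b) (hnadj : ¬ Adj n a b)
    (hM : ¬ ∃ i : Fin (2 * n + 3), Joins n T i a b) :
    (∃ i : Fin (2 * n + 3), i.val < n ∧ ECross n T i a b) ∧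
    ∃! i0 : Fin (2 * n + 3), i0.val < n ∧ ECross n T i0 a b ∧
      ∀ j : Fin (2 * n + 3), j.val < n → ECross n T j a b → j ≠ i0 →
        ∀ x ∈ crossPts n T i0 a b, ∀ y ∈ crossPts n T j a b,
          dist (vtx n a) x < dist (vtx n a) y := by
  classical
  -- existence of a crossing diagonal
  have hex : ∃ i : Fin (2 * n + 3), i.val < n ∧ ECross n T i a b := by
    by_contra hno
    push_neg at hno
    have hmax := T.maximal a b ⟨hab, hnadj⟩ (fun i hi hc => by
      refine hno i hi ?_
      rwa [ECross, Cross, Set.inter_comm]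
      )
    obtain ⟨i, _, hsp⟩ := hmax
    exact hM ⟨i, hsp⟩
  refine ⟨hex, ?_⟩
  set A := vtx n a with hA
  set B := vtx n b with hB
  have hABne : A ≠ B := fun h => hab (vtx_inj_s13 n h)
  have hvne : B - A ≠ 0 := sub_ne_zero.mpr (Ne.symm hABne)
  have hc : (0:ℝ) < ‖B - A‖ := norm_pos_iff.mpr hvne
  set v := B - A with hv
  -- crossing points lie on the open segment from A to B
  have hsub : ∀ i : Fin (2 * n + 3), crossPts n T i a b ⊆ openSegment ℝ A B :=
    fun i => Set.inter_subset_right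
  -- parameter sets
  set pset : Fin (2 * n + 3) → Set ℝ :=
    fun i => {s | s ∈ Set.Ioo (0:ℝ) 1 ∧ A + s • v ∈ crossPts n T i a b} with hpset
  have hparam : ∀ i : Fin (2 * n + 3), ∀ x ∈ crossPts n T i a b,
      ∃ s ∈ pset i, x = A + s • v := by
    intro i x hx
    have hx' := hsub i hx
    rw [openSegment_eq_image'] at hx'
    obtain ⟨s, hs, rfl⟩ := hx'
    exact ⟨s, ⟨hs, hx⟩, rfl⟩
  have hdist : ∀ s : ℝ, 0 ≤ s → dist A (A + s • v) = s * ‖v‖ := by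
    intro s hs
    rw [dist_eq_norm]
    simp [norm_smul, abs_of_nonneg hs]
  -- convexity of parameter sets
  have hconv : ∀ i : Fin (2 * n + 3), Convex ℝ (pset i) := by
    intro i
    have hcc : Convex ℝ (crossPts n T i a b) :=
      (convex_openSegment _ _).inter (convex_openSegment _ _)
    rw [convex_iff_ordConnected]
    constructor
    intro s1 hs1 s2 hs2 s hs
    refine ⟨⟨lt_of_lt_of_le hs1.1.1 hs.1, lt_of_le_of_lt hs.2 hs2.1.2⟩, ?_⟩
    exact hcc.segment_subset hs1.2 hs2.2 (mem_seg_param A v hs.1 hs.2)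
  -- disjointness of parameter sets for distinct edges
  have hdisj : ∀ i j : Fin (2 * n + 3), i ≠ j → ∀ s ∈ pset i, s ∉ pset j := by
    intro i j hne s hsi hsj
    exact T.noncross i j hne ⟨A + s • v, hsi.2.1, hsj.2.1⟩
  -- nonemptiness for crossing edges
  have hne : ∀ i : Fin (2 * n + 3), ECross n T i a b → (pset i).Nonempty := by
    intro i hi
    obtain ⟨x, hx⟩ := hi
    obtain ⟨s, hs, _⟩ := hparam i x hx
    exact ⟨s, hs⟩
  -- distance comparison from parameter comparison
  have hcmp : ∀ i j : Fin (2 * n + 3), (∀ s ∈ pset i, ∀ t ∈ pset j, s < t) →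
      ∀ x ∈ crossPts n T i a b, ∀ y ∈ crossPts n T j a b,
        dist A x < dist A y := by
    intro i j hlt x hx y hy
    obtain ⟨s, hs, rfl⟩ := hparam i x hx
    obtain ⟨t, ht, rfl⟩ := hparam j y hy
    rw [hdist s hs.1.1.le, hdist t ht.1.1.le]
    exact mul_lt_mul_of_pos_right (hlt s hs t ht) hc
  -- the finite set of crossing diagonals
  set S : Finset (Fin (2 * n + 3)) :=
    Finset.univ.filter (fun i => i.val < n ∧ ECross n T i a b) with hS
  have hmemS : ∀ i, i ∈ S ↔ i.val < n ∧ ECross n T i a b := by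
    intro i; simp [hS]
  have hSne : S.Nonempty := by
    obtain ⟨i, hi⟩ := hex
    exact ⟨i, (hmemS i).mpr hi⟩
  set val : Fin (2 * n + 3) → ℝ :=
    fun i => if h : (pset i).Nonempty then h.choose else 0 with hvaldef
  have hval : ∀ i ∈ S, val i ∈ pset i := by
    intro i hi
    have h : (pset i).Nonempty := hne i ((hmemS i).mp hi).2
    simp only [hvaldef, dif_pos h]
    exact h.choose_spec
  obtain ⟨i0, hi0S, hmin⟩ := S.exists_min_image val hSne
  have hi0 := (hmemS i0).mp hi0S
  -- main ordering property of i0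
  have hmain : ∀ j : Fin (2 * n + 3), j.val < n → ECross n T j a b → j ≠ i0 →
      ∀ x ∈ crossPts n T i0 a b, ∀ y ∈ crossPts n T j a b,
        dist A x < dist A y := by
    intro j hj hcj hjne
    have hjS : j ∈ S := (hmemS j).mpr ⟨hj, hcj⟩
    rcases tri_s13 (pset i0) (pset j) (hconv i0) (hconv j)
        (hdisj i0 j (Ne.symm hjne)) (hne i0 hi0.2) (hne j hcj) with h | h
    · exact hcmp i0 j h
    · exact absurd (hmin j hjS) (not_le.mpr (h (val i0) (hval i0 hi0S) (val j) (hval j hjS)))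
  refine ⟨i0, ⟨hi0.1, hi0.2, hmain⟩, ?_⟩
  -- uniqueness
  rintro i1 ⟨hi1n, hi1c, hmain1⟩
  by_contra hne10
  obtain ⟨x, hx⟩ := hi0.2
  obtain ⟨y, hy⟩ := id hi1c
  have h1 : dist A x < dist A y := hmain i1 hi1n hi1c hne10 x hx y hy
  have h2 : dist A y < dist A x := hmain1 i0 hi0.1 hi0.2 (fun h => hne10 h.symm) y hy x hx
  linarith
end

section
/- Let a and b be non-adjacent vertices of P, suppose the segment M = M_{a,b} is not an edge of T, and let T_{i_0} be the diagonal of T crossing M whose crossing point with M is closest to a, with endpoints c and d. Then the edge joining a and c and the edge joining a and d both belong to T; that is, T contains a triangle with side T_{i_0} and third vertex a. -/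
open scoped BigOperators Classical

noncomputable section

namespace Helpers
abbrev E2 := EuclideanSpace ℝ (Fin 2)

def dd (p q r : E2) : ℝ := (q 0 - p 0) * (r 1 - p 1) - (q 1 - p 1) * (r 0 - p 0)
def sq2 (p : E2) : ℝ := p 0 ^ 2 + p 1 ^ 2

lemma eq_of_coords {p q : E2} (h0 : p 0 = q 0) (h1 : p 1 = q 1) : p = q := by
  ext i; fin_cases i <;> assumption

lemma vtx0 (n : ℕ) (k : Fin (n+3)) : vtx n k 0 = Real.cos (2 * Real.pi * k / (n + 3)) := rfl
lemma vtx1 (n : ℕ) (k : Fin (n+3)) : vtx n k 1 = Real.sin (2 * Real.pi * k / (n + 3)) := rfl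

lemma sq2_vtx (n : ℕ) (k : Fin (n+3)) : sq2 (vtx n k) = 1 := by
  show Real.cos (2 * Real.pi * k / (n + 3)) ^ 2 + Real.sin (2 * Real.pi * k / (n + 3)) ^ 2 = 1
  rw [← Real.sin_sq_add_cos_sq (2 * Real.pi * k / (n + 3))]; ring

lemma vtx_inj (n : ℕ) : Function.Injective (vtx n) := by
  intro k₁ k₂ h
  have h0 : Real.cos (2 * Real.pi * k₁ / (n + 3)) = Real.cos (2 * Real.pi * k₂ / (n + 3)) := by
    rw [← vtx0, ← vtx0, h]
  have h1 : Real.sin (2 * Real.pi * k₁ / (n + 3)) = Real.sin (2 * Real.pi * k₂ / (n + 3)) := by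
    rw [← vtx1, ← vtx1, h]
  set x := 2 * Real.pi * k₁ / (n + 3)
  set y := 2 * Real.pi * k₂ / (n + 3)
  have hc : Real.cos (x - y) = 1 := by
    rw [Real.cos_sub, h0, h1]
    rw [← Real.sin_sq_add_cos_sq y]; ring
  have hn3 : (0:ℝ) < (n:ℝ) + 3 := by positivity
  have hk1 : (k₁:ℝ) < (n:ℝ) + 3 := by
    have := k₁.isLt; exact_mod_cast (by exact_mod_cast this : ((k₁:ℕ):ℝ) < ((n+3:ℕ):ℝ))
  have hk2 : (k₂:ℝ) < (n:ℝ) + 3 := by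
    have := k₂.isLt; exact_mod_cast (by exact_mod_cast this : ((k₂:ℕ):ℝ) < ((n+3:ℕ):ℝ))
  have hk1' : (0:ℝ) ≤ (k₁:ℝ) := by positivity
  have hk2' : (0:ℝ) ≤ (k₂:ℝ) := by positivity
  have hpi := Real.pi_pos
  have hb1 : x - y < 2 * Real.pi := by
    have : x < 2 * Real.pi := by
      show 2 * Real.pi * k₁ / (n + 3) < 2 * Real.pi
      rw [div_lt_iff₀ hn3]
      nlinarith
    have hy : 0 ≤ y := by positivity
    linarith
  have hb2 : -(2 * Real.pi) < x - y := by
    have : y < 2 * Real.pi := by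
      show 2 * Real.pi * k₂ / (n + 3) < 2 * Real.pi
      rw [div_lt_iff₀ hn3]
      nlinarith
    have hx : 0 ≤ x := by positivity
    linarith
  have hxy : x = y := by
    have := (Real.cos_eq_one_iff_of_lt_of_lt hb2 hb1).mp hc
    linarith
  have hkk : (k₁:ℝ) = (k₂:ℝ) := by
    have := congrArg (fun z => z * ((n:ℝ)+3)) hxy
    simp only [x, y] at this
    field_simp at this
    exact_mod_cast this
  exact Fin.ext (by exact_mod_cast hkk)


lemma dd_comb (p q y z : E2) (s t : ℝ) (h : s + t = 1) :
    dd p q (s • y + t • z) = s * dd p q y + t * dd p q z := by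
  have hs : s = 1 - t := by linarith
  subst hs
  simp [dd, PiLp.add_apply, PiLp.smul_apply]
  ring

lemma dd_cyc (p q r : E2) : dd p q r = dd q r p := by simp only [dd]; ring
lemma dd_self1 (p q : E2) : dd p q p = 0 := by simp only [dd]; ring
lemma dd_self2 (p q : E2) : dd p q q = 0 := by simp only [dd]; ring

lemma bary (p q r z : E2) :
    (dd p q r) • z = (dd z q r) • p + (dd p z r) • q + (dd p q z) • r := by
  ext i
  fin_cases i <;> simp [dd, PiLp.add_apply, PiLp.smul_apply] <;> ring

lemma bary_sum (p q r z : E2) : dd z q r + dd p z r + dd p q z = dd p q r := by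
  simp only [dd]; ring

/-- Three distinct points on the unit circle are not collinear. -/
lemma dd_ne {p q r : E2} (h1 : sq2 p = 1) (h2 : sq2 q = 1) (h3 : sq2 r = 1)
    (hpq : p ≠ q) (hpr : p ≠ r) (hqr : q ≠ r) : dd p q r ≠ 0 := by
  intro hdd
  have hD : 0 < (q 0 - p 0) ^ 2 + (q 1 - p 1) ^ 2 := by
    rcases (show q 0 - p 0 ≠ 0 ∨ q 1 - p 1 ≠ 0 by
      by_contra hcon
      push_neg at hcon
      exact hpq (eq_of_coords (by linarith [hcon.1]) (by linarith [hcon.2]))) with h | h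
    · positivity
    · positivity
  simp only [dd] at hdd
  simp only [sq2] at h1 h2 h3
  -- build t with r = p + t (q - p)
  obtain ⟨t, ht0, ht1⟩ : ∃ t : ℝ, r 0 = p 0 + t * (q 0 - p 0) ∧ r 1 = p 1 + t * (q 1 - p 1) := by
    by_cases h0 : q 0 - p 0 = 0
    · have h1' : q 1 - p 1 ≠ 0 := by
        intro h1'
        exact hpq (eq_of_coords (by linarith) (by linarith))
      refine ⟨(r 1 - p 1) / (q 1 - p 1), ?_, by field_simp; ring⟩
      have hz : (q 1 - p 1) * (r 0 - p 0) = 0 := by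
        linear_combination (r 1 - p 1) * h0 - hdd
      have h4 : r 0 - p 0 = 0 := by
        rcases mul_eq_zero.mp hz with h | h
        · exact absurd h h1'
        · exact h
      rw [h0]; linarith
    · refine ⟨(r 0 - p 0) / (q 0 - p 0), by field_simp; ring, ?_⟩
      have hq : (q 0 - p 0) * (r 1 - p 1) = (r 0 - p 0) * (q 1 - p 1) := by
        linear_combination hdd
      field_simp
      linear_combination hq
  rw [ht0, ht1] at h3
  have key : t * (1 - t) * ((q 0 - p 0) ^ 2 + (q 1 - p 1) ^ 2) = 0 := by
    linear_combination (1 - t) * h1 + t * h2 - h3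
  have : t * (1 - t) = 0 := by
    rcases mul_eq_zero.mp key with h | h
    · exact h
    · linarith
  rcases mul_eq_zero.mp this with h | h
  · exact hpr (eq_of_coords (by rw [ht0, h]; ring) (by rw [ht1, h]; ring))
  · have ht : t = 1 := by linarith
    exact hqr ((eq_of_coords (by rw [ht0, ht]; ring) (by rw [ht1, ht]; ring)).symm)

/-- Two open segments sharing the endpoint `p` are disjoint if `p,q,r` not collinear. -/
lemma no_shared {p q r z : E2} (h : dd p q r ≠ 0)
    (h1 : z ∈ openSegment ℝ p q) (h2 : z ∈ openSegment ℝ p r) : False := by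
  obtain ⟨s, t, hs, ht, hst, hz⟩ := h1
  obtain ⟨s', t', hs', ht', hst', hz'⟩ := h2
  have e1 : dd p q z = 0 := by
    rw [← hz, dd_comb p q p q s t hst, dd_self1, dd_self2]; ring
  have e2 : dd p q z = t' * dd p q r := by
    rw [← hz', dd_comb p q p r s' t' hst', dd_self1]; ring
  rw [e1] at e2
  exact h (by
    rcases mul_eq_zero.mp e2.symm with h' | h'
    · exact absurd h' (ne_of_gt ht')
    · exact h')

lemma mem_open_of {p q z : E2} {c1 c2 S : ℝ} (h1 : 0 < c1) (h2 : 0 < c2)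
    (hS : c1 + c2 = S) (h : S • z = c1 • p + c2 • q) : z ∈ openSegment ℝ p q := by
  have hS0 : 0 < S := by linarith
  refine ⟨c1 / S, c2 / S, by positivity, by positivity, by field_simp; linarith, ?_⟩
  have : z = S⁻¹ • (c1 • p + c2 • q) := by
    rw [← h, smul_smul, inv_mul_cancel₀ (ne_of_gt hS0), one_smul]
  rw [this, smul_add, smul_smul, smul_smul]
  rw [div_eq_inv_mul, div_eq_inv_mul]

lemma open_trans {U V x y : E2} (hx : x ∈ openSegment ℝ U V)
    (hy : y ∈ openSegment ℝ x V) : y ∈ openSegment ℝ U V := by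
  obtain ⟨a, b, ha, hb, hab, hxeq⟩ := hx
  obtain ⟨c, d, hc, hd, hcd, hyeq⟩ := hy
  refine mem_open_of (c1 := c * a) (c2 := c * b + d) (S := 1) (mul_pos hc ha)
    (by have := mul_pos hc hb; linarith)
    (by linear_combination c * hab + hcd) ?_
  rw [one_smul, ← hyeq, ← hxeq]
  module

lemma open_trans' {U V x y : E2} (hx : x ∈ openSegment ℝ U V)
    (hy : y ∈ openSegment ℝ U x) : y ∈ openSegment ℝ U V := by
  rw [openSegment_symm] at hx hy ⊢
  exact open_trans hx hy

/-- A point strictly inside a chord of the unit circle has `sq2 < 1`. -/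
lemma sq2_open_lt {A B m : E2} (hA : sq2 A = 1) (hB : sq2 B = 1) (hAB : A ≠ B)
    (hm : m ∈ openSegment ℝ A B) : sq2 m < 1 := by
  obtain ⟨s, t, hs, ht, hst, hmeq⟩ := hm
  have hD : 0 < (A 0 - B 0) ^ 2 + (A 1 - B 1) ^ 2 := by
    rcases (show A 0 - B 0 ≠ 0 ∨ A 1 - B 1 ≠ 0 by
      by_contra hcon
      push_neg at hcon
      exact hAB (eq_of_coords (by linarith [hcon.1]) (by linarith [hcon.2]))) with h | h
    · positivity
    · positivity
  have hm0 : m 0 = s * A 0 + t * B 0 := by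
    rw [← hmeq]; simp [PiLp.add_apply, PiLp.smul_apply]
  have hm1 : m 1 = s * A 1 + t * B 1 := by
    rw [← hmeq]; simp [PiLp.add_apply, PiLp.smul_apply]
  simp only [sq2] at hA hB ⊢
  have key : 1 - (m 0 ^ 2 + m 1 ^ 2) = s * t * ((A 0 - B 0) ^ 2 + (A 1 - B 1) ^ 2) := by
    rw [hm0, hm1]
    linear_combination (-(s^2 + s*t)) * hA + (-(t^2 + s*t)) * hB + (-(s + t + 1)) * hst
  nlinarith [mul_pos (mul_pos hs ht) hD]

lemma lt_one_of_sq_le {t u : ℝ} (h : t ^ 2 ≤ u) (hu : u < 1) : t < 1 := by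
  nlinarith [sq_nonneg (t - 1)]

lemma not_in_tri_real (a0 a1 c0 c1 m0 m1 v0 v1 lA lC lM : ℝ)
    (e0 : (lA + lC + lM) * v0 = lA * a0 + lC * c0 + lM * m0)
    (e1 : (lA + lC + lM) * v1 = lA * a1 + lC * c1 + lM * m1)
    (hlA : 0 ≤ lA) (hlC : 0 ≤ lC) (hlM : 0 < lM)
    (hA : a0 ^ 2 + a1 ^ 2 = 1) (hC : c0 ^ 2 + c1 ^ 2 = 1)
    (hM : m0 ^ 2 + m1 ^ 2 < 1) (hV : v0 ^ 2 + v1 ^ 2 = 1) : False := by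
  have hMn : 0 ≤ m0 ^ 2 + m1 ^ 2 := by positivity
  have iAC : a0 * c0 + a1 * c1 ≤ 1 := by nlinarith [sq_nonneg (a0 - c0), sq_nonneg (a1 - c1)]
  have iAM2 : (a0 * m0 + a1 * m1) ^ 2 ≤ m0 ^ 2 + m1 ^ 2 := by
    nlinarith [sq_nonneg (a0 * m1 - a1 * m0)]
  have iCM2 : (c0 * m0 + c1 * m1) ^ 2 ≤ m0 ^ 2 + m1 ^ 2 := by
    nlinarith [sq_nonneg (c0 * m1 - c1 * m0)]
  have iAM : a0 * m0 + a1 * m1 < 1 := lt_one_of_sq_le iAM2 hM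
  have iCM : c0 * m0 + c1 * m1 < 1 := lt_one_of_sq_le iCM2 hM
  have expand : (lA + lC + lM) ^ 2 = lA ^ 2 + lC ^ 2 + lM ^ 2 * (m0 ^ 2 + m1 ^ 2)
      + 2 * lA * lC * (a0 * c0 + a1 * c1)
      + 2 * lA * lM * (a0 * m0 + a1 * m1)
      + 2 * lC * lM * (c0 * m0 + c1 * m1) := by
    linear_combination (lA * a0 + lC * c0 + lM * m0 + (lA + lC + lM) * v0) * e0
      + (lA * a1 + lC * c1 + lM * m1 + (lA + lC + lM) * v1) * e1
      - (lA + lC + lM) ^ 2 * hV + lA ^ 2 * hA + lC ^ 2 * hC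
  nlinarith [mul_pos hlM hlM, mul_nonneg hlA hlC, mul_nonneg hlA (le_of_lt hlM),
    mul_nonneg hlC (le_of_lt hlM)]

/-- No unit-circle point lies in the closed triangle `A C M` off the line `A C`,
when `M` is interior to the disk. -/
lemma not_in_tri {A C M V : E2} (lA lC lM : ℝ)
    (h : (lA + lC + lM) • V = lA • A + lC • C + lM • M)
    (hlA : 0 ≤ lA) (hlC : 0 ≤ lC) (hlM : 0 < lM)
    (hA : sq2 A = 1) (hC : sq2 C = 1) (hM : sq2 M < 1) (hV : sq2 V = 1) : False := by
  have e0 : (lA + lC + lM) * V 0 = lA * A 0 + lC * C 0 + lM * M 0 := by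
    have h' := congrArg (fun v : E2 => v 0) h
    simpa [PiLp.add_apply, PiLp.smul_apply] using h'
  have e1 : (lA + lC + lM) * V 1 = lA * A 1 + lC * C 1 + lM * M 1 := by
    have h' := congrArg (fun v : E2 => v 1) h
    simpa [PiLp.add_apply, PiLp.smul_apply] using h'
  simp only [sq2] at hA hC hM hV
  exact not_in_tri_real (A 0) (A 1) (C 0) (C 1) (M 0) (M 1) (V 0) (V 1) lA lC lM
    e0 e1 hlA hlC hlM hA hC hM hV


def sqd (p q : E2) : ℝ := (p 0 - q 0) ^ 2 + (p 1 - q 1) ^ 2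

lemma dist_lt_of_sqd {p q r : E2} (h : sqd p q < sqd p r) : dist p q < dist p r := by
  rw [EuclideanSpace.dist_eq, EuclideanSpace.dist_eq]
  apply Real.sqrt_lt_sqrt
  · positivity
  · simpa [Fin.sum_univ_two, Real.dist_eq, sq_abs, sqd] using h

/-- the three barycentric affine functionals wrt `A C m`, scaled by `σ = dd A C m`. -/
lemma abg_sum (A C m z : E2) :
    dd A C m * dd C m z + dd A C m * dd m A z + dd A C m * dd A C z = (dd A C m) ^ 2 := by
  simp only [dd]; ring

lemma abg_bary (A C m z : E2) :
    ((dd A C m) ^ 2) • z = (dd A C m * dd C m z) • A + (dd A C m * dd m A z) • C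
      + (dd A C m * dd A C z) • m := by
  ext i
  fin_cases i <;> simp [dd, PiLp.add_apply, PiLp.smul_apply] <;> ring

lemma sqd_pos_of_dd {A C m : E2} (hσ : dd A C m ≠ 0) : 0 < sqd A m := by
  have hnn : (0:ℝ) ≤ sqd A m := by
    show (0:ℝ) ≤ (A 0 - m 0) ^ 2 + (A 1 - m 1) ^ 2
    positivity
  rcases lt_or_eq_of_le hnn with h | h
  · exact h
  · exfalso
    apply hσ
    have h' : (A 0 - m 0) ^ 2 + (A 1 - m 1) ^ 2 = 0 := h.symm
    have e0 : A 0 = m 0 := by nlinarith [sq_nonneg (A 0 - m 0), sq_nonneg (A 1 - m 1)]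
    have e1 : A 1 = m 1 := by nlinarith [sq_nonneg (A 0 - m 0), sq_nonneg (A 1 - m 1)]
    simp only [dd]
    linear_combination (C 0 - A 0) * e1.symm - (C 1 - A 1) * e0.symm

/-- Endgame: a point of `[U,V]` with barycentric signs `α = 0, β > 0, γ > 0`
lies on the open segment `A B`, strictly closer to `A` than `m`. -/
lemma final {A B C m U V y : E2}
    (hm2 : m ∈ openSegment ℝ A B)
    (hyUV : y ∈ openSegment ℝ U V)
    (ha : dd A C m * dd m A y = 0)
    (hb : 0 < dd A C m * dd C m y)
    (hg : 0 < dd A C m * dd A C y) :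
    ∃ y', y' ∈ openSegment ℝ U V ∧ y' ∈ openSegment ℝ A B ∧ sqd A y' < sqd A m := by
  obtain ⟨ma, mb, hma, hmb, hmab, hmeq⟩ := hm2
  have hσ : dd A C m ≠ 0 := by
    intro h0
    rw [h0] at hg; simp at hg
  set σ := dd A C m with hσdef
  set By := σ * dd C m y with hBy
  set Gy := σ * dd A C y with hGy
  have hsum : By + Gy = σ ^ 2 := by
    have := abg_sum A C m y
    rw [← hσdef] at this
    rw [hBy, hGy]; linarith [this, ha]
  have hv : (σ ^ 2) • y = By • A + Gy • m := by
    have h1 := abg_bary A C m y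
    rw [← hσdef, ha, zero_smul, add_zero] at h1
    rw [h1]
  have hσ2 : 0 < σ ^ 2 := lt_of_le_of_ne (sq_nonneg σ) (Ne.symm (pow_ne_zero 2 hσ))
  have hyAB : y ∈ openSegment ℝ A B := by
    refine mem_open_of (c1 := By + Gy * ma) (c2 := Gy * mb) (S := σ ^ 2)
      (by nlinarith [mul_pos hg hma]) (mul_pos hg hmb)
      (by rw [← hsum]; linear_combination Gy * hmab) ?_
    rw [hv, ← hmeq]; module
  have e0 : σ ^ 2 * (y 0 - A 0) = Gy * (m 0 - A 0) := by
    have h0 := congrArg (fun v : E2 => v 0) hv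
    simp only [PiLp.add_apply, PiLp.smul_apply, smul_eq_mul] at h0
    linear_combination h0 + A 0 * hsum
  have e1 : σ ^ 2 * (y 1 - A 1) = Gy * (m 1 - A 1) := by
    have h1 := congrArg (fun v : E2 => v 1) hv
    simp only [PiLp.add_apply, PiLp.smul_apply, smul_eq_mul] at h1
    linear_combination h1 + A 1 * hsum
  refine ⟨y, hyUV, hyAB, ?_⟩
  have hGlt : Gy < σ ^ 2 := by linarith
  have hsqm : 0 < sqd A m := sqd_pos_of_dd hσ
  have hkey : σ ^ 2 * σ ^ 2 * sqd A y = Gy ^ 2 * sqd A m := by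
    show σ ^ 2 * σ ^ 2 * ((A 0 - y 0) ^ 2 + (A 1 - y 1) ^ 2)
      = Gy ^ 2 * ((A 0 - m 0) ^ 2 + (A 1 - m 1) ^ 2)
    linear_combination (σ ^ 2 * (y 0 - A 0) + Gy * (m 0 - A 0)) * e0
      + (σ ^ 2 * (y 1 - A 1) + Gy * (m 1 - A 1)) * e1
  have hsy : (0:ℝ) ≤ sqd A y := by
    show (0:ℝ) ≤ (A 0 - y 0) ^ 2 + (A 1 - y 1) ^ 2
    positivity
  have h1 : Gy ^ 2 < σ ^ 2 * σ ^ 2 := by nlinarith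
  have h2 : σ ^ 2 * σ ^ 2 * sqd A y < σ ^ 2 * σ ^ 2 * sqd A m := by
    nlinarith [hkey, mul_pos (sub_pos.mpr h1) hsqm]
  exact lt_of_mul_lt_mul_left h2 (by positivity)


/-- Core geometric step: if `m` is the crossing point of diagonal `[C,D]` with `[A,B]`,
and the segment `[U,V]` crosses `[A,C]`, with `V` on the same side of line `AC` as `m`,
then `[U,V]` either crosses `[C,D]`, or crosses `[A,B]` strictly closer to `A` than `m`. -/
lemma core {A B C D U V m x : E2}
    (hA : sq2 A = 1) (hB : sq2 B = 1) (hC : sq2 C = 1) (hVn : sq2 V = 1)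
    (hABne : A ≠ B)
    (hm1 : m ∈ openSegment ℝ C D) (hm2 : m ∈ openSegment ℝ A B)
    (hx1 : x ∈ openSegment ℝ U V) (hx2 : x ∈ openSegment ℝ A C)
    (hgV : 0 < dd A C m * dd A C V) :
    (∃ y, y ∈ openSegment ℝ U V ∧ y ∈ openSegment ℝ C D) ∨
    (∃ y, y ∈ openSegment ℝ U V ∧ y ∈ openSegment ℝ A B ∧ sqd A y < sqd A m) := by
  obtain ⟨mc, md, hmc, hmd, hmcd, hmeq⟩ := hm1
  obtain ⟨xa, xc, hxa, hxc, hxac, hxeq⟩ := hx2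
  set σ := dd A C m with hσdef
  have hσ : σ ≠ 0 := fun h0 => by rw [h0] at hgV; simp at hgV
  have hσ2 : 0 < σ ^ 2 := lt_of_le_of_ne (sq_nonneg σ) (Ne.symm (pow_ne_zero 2 hσ))
  -- barycentric values at x
  have hax : σ * dd m A x = xc * σ ^ 2 := by
    rw [← hxeq, dd_comb m A A C xa xc hxac, dd_self2]
    have h' : dd m A C = σ := by rw [hσdef]; simp only [dd]; ring
    rw [h']; ring
  have hbx : σ * dd C m x = xa * σ ^ 2 := by
    rw [← hxeq, dd_comb C m A C xa xc hxac, dd_self1]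
    have h' : dd C m A = σ := by rw [hσdef]; simp only [dd]; ring
    rw [h']; ring
  have hgx : σ * dd A C x = 0 := by
    rw [← hxeq, dd_comb A C A C xa xc hxac, dd_self1, dd_self2]; ring
  have haxp : 0 < σ * dd m A x := by rw [hax]; positivity
  have hbxp : 0 < σ * dd C m x := by rw [hbx]; positivity
  -- m is strictly inside the disk
  have hsq2m : sq2 m < 1 := sq2_open_lt hA hB hABne hm2
  -- V is not in the closed triangle A C m
  have hVout : σ * dd C m V < 0 ∨ σ * dd m A V < 0 := by
    by_contra hcon
    push_neg at hcon
    obtain ⟨hbV, haV⟩ := hcon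
    have hsum := abg_sum A C m V
    rw [← hσdef] at hsum
    have hbar := abg_bary A C m V
    rw [← hσdef] at hbar
    refine not_in_tri (lA := σ * dd C m V) (lC := σ * dd m A V) (lM := σ * dd A C V)
      ?_ hbV haV hgV hA hC hsq2m hVn
    have hs : σ * dd C m V + σ * dd m A V + σ * dd A C V = σ ^ 2 := by linarith
    rw [hs]
    exact hbar
  -- the subsegment from x towards V stays in [U,V]
  have hsub : ∀ t : ℝ, 0 < t → t < 1 → (1 - t) • x + t • V ∈ openSegment ℝ U V := by
    intro t ht0 ht1
    exact open_trans hx1 ⟨1 - t, t, by linarith, ht0, by ring, rfl⟩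
  by_cases hbV : σ * dd C m V < 0
  · -- β(V) < 0 : [x,V] crosses the line C-m first
    have hden : 0 < σ * dd C m x - σ * dd C m V := by linarith
    set t1 := (σ * dd C m x) / (σ * dd C m x - σ * dd C m V) with ht1d
    have ht1a : 0 < t1 := div_pos hbxp hden
    have ht1b : t1 < 1 := by
      rw [ht1d, div_lt_one hden]; linarith
    set y := (1 - t1) • x + t1 • V with hyd
    have hyxV : y ∈ openSegment ℝ x V := ⟨1 - t1, t1, by linarith, ht1a, by ring, rfl⟩
    have hyUV : y ∈ openSegment ℝ U V := hsub t1 ht1a ht1b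
    have hcomb_b : σ * dd C m y = (1 - t1) * (σ * dd C m x) + t1 * (σ * dd C m V) := by
      rw [hyd, dd_comb C m x V (1 - t1) t1 (by ring)]; ring
    have hby : σ * dd C m y = 0 := by
      rw [hcomb_b, ht1d]; linear_combination (-1 : ℝ) * div_mul_cancel₀ (σ * dd C m x) hden.ne'
    have hgy : 0 < σ * dd A C y := by
      have hcomb : σ * dd A C y = (1 - t1) * (σ * dd A C x) + t1 * (σ * dd A C V) := by
        rw [hyd, dd_comb A C x V (1 - t1) t1 (by ring)]; ring
      rw [hcomb, hgx]
      have := mul_pos ht1a hgV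
      linarith
    have hay : σ * dd m A y = (1 - t1) * (σ * dd m A x) + t1 * (σ * dd m A V) := by
      rw [hyd, dd_comb m A x V (1 - t1) t1 (by ring)]; ring
    by_cases hay0 : 0 ≤ σ * dd m A y
    · -- y lies on the open segment C D
      left
      refine ⟨y, hyUV, ?_⟩
      have hsum := abg_sum A C m y
      rw [← hσdef] at hsum
      have hbar := abg_bary A C m y
      rw [← hσdef, hby, zero_smul, zero_add] at hbar
      have hs : σ * dd m A y + σ * dd A C y = σ ^ 2 := by linarith
      refine mem_open_of (c1 := σ * dd m A y + (σ * dd A C y) * mc)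
        (c2 := (σ * dd A C y) * md) (S := σ ^ 2)
        (by nlinarith [mul_pos hgy hmc]) (mul_pos hgy hmd)
        (by linear_combination hs + (σ * dd A C y) * hmcd) ?_
      rw [hbar, ← hmeq]; module
    · -- α(y) < 0 : [x,y] crosses the line A-m, strictly closer to A
      right
      push_neg at hay0
      have hden2 : 0 < σ * dd m A x - σ * dd m A y := by linarith
      set t2 := (σ * dd m A x) / (σ * dd m A x - σ * dd m A y) with ht2d
      have ht2a : 0 < t2 := div_pos haxp hden2
      have ht2b : t2 < 1 := by rw [ht2d, div_lt_one hden2]; linarith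
      set y' := (1 - t2) • x + t2 • y with hy'd
      have hy'xy : y' ∈ openSegment ℝ x y := ⟨1 - t2, t2, by linarith, ht2a, by ring, rfl⟩
      have hy'xV : y' ∈ openSegment ℝ x V := open_trans' hyxV hy'xy
      have hy'UV : y' ∈ openSegment ℝ U V := open_trans hx1 hy'xV
      have hay' : σ * dd m A y' = 0 := by
        have hcomb : σ * dd m A y' = (1 - t2) * (σ * dd m A x) + t2 * (σ * dd m A y) := by
          rw [hy'd, dd_comb m A x y (1 - t2) t2 (by ring)]; ring
        rw [hcomb, ht2d]; linear_combination (-1 : ℝ) * div_mul_cancel₀ (σ * dd m A x) hden2.ne'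
      have hby' : 0 < σ * dd C m y' := by
        have hcomb : σ * dd C m y' = (1 - t2) * (σ * dd C m x) + t2 * (σ * dd C m y) := by
          rw [hy'd, dd_comb C m x y (1 - t2) t2 (by ring)]; ring
        rw [hcomb, hby]
        have := mul_pos (show (0:ℝ) < 1 - t2 by linarith) hbxp
        linarith
      have hgy' : 0 < σ * dd A C y' := by
        have hcomb : σ * dd A C y' = (1 - t2) * (σ * dd A C x) + t2 * (σ * dd A C y) := by
          rw [hy'd, dd_comb A C x y (1 - t2) t2 (by ring)]; ring
        rw [hcomb, hgx]
        have := mul_pos ht2a hgy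
        linarith
      exact final hm2 hy'UV hay' hby' hgy'
  · -- β(V) ≥ 0, hence α(V) < 0 : [x,V] crosses the line A-m, strictly closer to A
    right
    push_neg at hbV
    have haV : σ * dd m A V < 0 := by
      rcases hVout with h | h
      · exact absurd hbV (not_le.mpr h)
      · exact h
    have hden : 0 < σ * dd m A x - σ * dd m A V := by linarith
    set t3 := (σ * dd m A x) / (σ * dd m A x - σ * dd m A V) with ht3d
    have ht3a : 0 < t3 := div_pos haxp hden
    have ht3b : t3 < 1 := by rw [ht3d, div_lt_one hden]; linarith
    set y := (1 - t3) • x + t3 • V with hyd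
    have hyUV : y ∈ openSegment ℝ U V := hsub t3 ht3a ht3b
    have hay : σ * dd m A y = 0 := by
      have hcomb : σ * dd m A y = (1 - t3) * (σ * dd m A x) + t3 * (σ * dd m A V) := by
        rw [hyd, dd_comb m A x V (1 - t3) t3 (by ring)]; ring
      rw [hcomb, ht3d]; linear_combination (-1 : ℝ) * div_mul_cancel₀ (σ * dd m A x) hden.ne'
    have hby : 0 < σ * dd C m y := by
      have hcomb : σ * dd C m y = (1 - t3) * (σ * dd C m x) + t3 * (σ * dd C m V) := by
        rw [hyd, dd_comb C m x V (1 - t3) t3 (by ring)]; ring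
      rw [hcomb]
      have h1 := mul_pos (show (0:ℝ) < 1 - t3 by linarith) hbxp
      have h2 := mul_nonneg (le_of_lt ht3a) hbV
      linarith
    have hgy : 0 < σ * dd A C y := by
      have hcomb : σ * dd A C y = (1 - t3) * (σ * dd A C x) + t3 * (σ * dd A C V) := by
        rw [hyd, dd_comb A C x V (1 - t3) t3 (by ring)]; ring
      rw [hcomb, hgx]
      have := mul_pos ht3a hgV
      linarith
    exact final hm2 hyUV hay hby hgy

end Helpers

open Helpers

section Glue

variable {n : ℕ}

lemma vtx_ne {i j : Fin (n + 3)} (h : i ≠ j) : vtx n i ≠ vtx n j :=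
  fun he => h (Helpers.vtx_inj n he)

lemma dd_vtx_ne {i j k : Fin (n + 3)} (hij : i ≠ j) (hik : i ≠ k) (hjk : j ≠ k) :
    dd (vtx n i) (vtx n j) (vtx n k) ≠ 0 :=
  dd_ne (sq2_vtx n i) (sq2_vtx n j) (sq2_vtx n k) (vtx_ne hij) (vtx_ne hik) (vtx_ne hjk)

lemma samePair_flip {u v w z : Fin (n + 3)} (h : SamePair n u v w z) : SamePair n u v z w := by
  rcases h with ⟨h1, h2⟩ | ⟨h1, h2⟩
  · exact Or.inr ⟨h1, h2⟩
  · exact Or.inl ⟨h1, h2⟩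

lemma exists_joins (T : Triangulation n) (a b c d : Fin (n + 3)) (i0 : Fin (2 * n + 3))
    (hab : a ≠ b)
    (hM : ¬ ∃ i : Fin (2 * n + 3), Joins n T i a b)
    (hi0d : i0.val < n) (hi0M : ECross n T i0 a b)
    (hclosest : ∀ j : Fin (2 * n + 3), j.val < n → ECross n T j a b → j ≠ i0 →
      ∀ x ∈ crossPts n T i0 a b, ∀ y ∈ crossPts n T j a b,
        dist (vtx n a) x < dist (vtx n a) y)
    (hcd : Joins n T i0 c d) :
    ∃ i : Fin (2 * n + 3), Joins n T i a c := by
  obtain ⟨m, hmST, hmAB⟩ := hi0M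
  have hcdne : c ≠ d := by
    have h := (T.diag i0 hi0d).1
    rcases hcd with ⟨h1, h2⟩ | ⟨h1, h2⟩
    · rw [h1, h2] at h; exact h
    · rw [h1, h2] at h; exact Ne.symm h
  have hmCD : m ∈ openSegment ℝ (vtx n c) (vtx n d) := by
    rcases hcd with ⟨h1, h2⟩ | ⟨h1, h2⟩
    · rwa [h1, h2] at hmST
    · rw [h1, h2] at hmST; rwa [openSegment_symm] at hmST
  -- the endpoints of the two crossing segments are pairwise distinct
  have hac : a ≠ c := by
    intro he
    by_cases hbd : b = d
    · exact hM ⟨i0, by rwa [← he, ← hbd] at hcd⟩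
    · refine no_shared (dd_vtx_ne (i := a) (j := d) (k := b) ?_ hab ?_) ?_ hmAB
      · rw [he]; exact hcdne
      · exact fun h => hbd h.symm
      · rwa [← he] at hmCD
  have had : a ≠ d := by
    intro he
    by_cases hbc : b = c
    · refine hM ⟨i0, ?_⟩
      rcases hcd with ⟨h1, h2⟩ | ⟨h1, h2⟩
      · exact Or.inr ⟨by rw [h1, ← hbc], by rw [h2, ← he]⟩
      · exact Or.inl ⟨by rw [h1, ← he], by rw [h2, ← hbc]⟩
    · refine no_shared (dd_vtx_ne (i := a) (j := c) (k := b) ?_ hab ?_) ?_ hmAB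
      · exact hac
      · exact fun h => hbc h.symm
      · rw [← he] at hmCD; rwa [openSegment_symm] at hmCD
  have hbc : b ≠ c := by
    intro he
    refine no_shared (dd_vtx_ne (i := b) (j := d) (k := a) ?_ (Ne.symm hab) ?_)
      ?_ (by rwa [openSegment_symm] at hmAB)
    · rw [he]; exact hcdne
    · exact Ne.symm had
    · rwa [← he] at hmCD
  have hbd : b ≠ d := by
    intro he
    refine no_shared (dd_vtx_ne (i := b) (j := c) (k := a) ?_ (Ne.symm hab) ?_)
      ?_ (by rwa [openSegment_symm] at hmAB)
    · exact hbc
    · exact Ne.symm hac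
    · rw [← he] at hmCD; rwa [openSegment_symm] at hmCD
  -- main argument
  by_contra hno
  by_cases hadj : Adj n a c
  · obtain ⟨i, _, hsp⟩ := T.bdry_complete a c hadj
    exact hno ⟨i, hsp⟩
  have hnc : ∀ j : Fin (2 * n + 3), j.val < n →
      ¬ Cross n a c (T.src j) (T.tgt j) := by
    intro j hj hcross
    obtain ⟨x, hxAC, hxUV⟩ := hcross
    have huv : T.src j ≠ T.tgt j := (T.diag j hj).1
    have hnsp : ¬ SamePair n (T.src j) (T.tgt j) a c := fun hsp => hno ⟨j, hsp⟩
    -- endpoints of T_j are distinct from a and c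
    have hua : T.src j ≠ a := by
      intro he
      by_cases hvc : T.tgt j = c
      · exact hnsp (Or.inl ⟨he, hvc⟩)
      · refine no_shared (dd_vtx_ne (i := a) (j := T.tgt j) (k := c)
          (fun h => huv (he.trans h)) hac hvc) ?_ hxAC
        rwa [he] at hxUV
    have hva : T.tgt j ≠ a := by
      intro he
      by_cases huc : T.src j = c
      · exact hnsp (Or.inr ⟨huc, he⟩)
      · refine no_shared (dd_vtx_ne (i := a) (j := T.src j) (k := c)
          (Ne.symm hua) hac huc) ?_ hxAC
        rw [he] at hxUV; rwa [openSegment_symm] at hxUV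
    have huc : T.src j ≠ c := by
      intro he
      refine no_shared (dd_vtx_ne (i := c) (j := T.tgt j) (k := a)
        (fun h => huv (he.trans h)) (Ne.symm hac) hva)
        ?_ (by rwa [openSegment_symm] at hxAC)
      rwa [he] at hxUV
    have hvc : T.tgt j ≠ c := by
      intro he
      refine no_shared (dd_vtx_ne (i := c) (j := T.src j) (k := a)
        (Ne.symm huc) (Ne.symm hac) hua)
        ?_ (by rwa [openSegment_symm] at hxAC)
      rw [he] at hxUV; rwa [openSegment_symm] at hxUV
    have hji0 : j ≠ i0 := by
      intro he
      rcases hcd with ⟨h1, h2⟩ | ⟨h1, h2⟩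
      · exact huc (by rw [he, h1])
      · exact hvc (by rw [he, h2])
    -- abbreviations
    set A := vtx n a
    set B := vtx n b
    set C := vtx n c
    set U := vtx n (T.src j)
    set V := vtx n (T.tgt j)
    -- σ ≠ 0
    have hσ : dd A C m ≠ 0 := by
      obtain ⟨mc, md, hmc, hmd, hmcd, hmeq⟩ := hmCD
      have : dd A C m = mc * dd A C (vtx n c) + md * dd A C (vtx n d) := by
        rw [← hmeq]; exact dd_comb A C _ _ mc md hmcd
      rw [this, dd_self2]
      have hACD : dd A C (vtx n d) ≠ 0 := dd_vtx_ne hac had hcdne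
      intro h0
      apply hACD
      have := mul_eq_zero.mp (by linarith [h0] : md * dd A C (vtx n d) = 0)
      rcases this with h | h
      · exact absurd h (ne_of_gt hmd)
      · exact h
    have hgU : dd A C U ≠ 0 := dd_vtx_ne hac (Ne.symm hua) (Ne.symm huc)
    have hgV' : dd A C V ≠ 0 := dd_vtx_ne hac (Ne.symm hva) (Ne.symm hvc)
    -- relation forcing opposite signs of γ at U and V
    obtain ⟨xu, xv, hxu, hxv, hxuv, hxeq⟩ := hxUV
    have hrel : xu * dd A C U + xv * dd A C V = 0 := by
      have h1 : dd A C x = xu * dd A C U + xv * dd A C V := by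
        rw [← hxeq]; exact dd_comb A C U V xu xv hxuv
      obtain ⟨xa, xc, hxa, hxc, hxac, hxeq2⟩ := hxAC
      have h2 : dd A C x = 0 := by
        rw [← hxeq2, dd_comb A C A C xa xc hxac, dd_self1, dd_self2]; ring
      rw [← h1, h2]
    -- the final contradiction, given the conclusion of `core`
    have hxUV' : x ∈ openSegment ℝ U V := hxeq ▸ ⟨xu, xv, hxu, hxv, hxuv, rfl⟩
    have hcontra : (∃ y, y ∈ openSegment ℝ U V ∧
          y ∈ openSegment ℝ (vtx n c) (vtx n d)) ∨
        (∃ y, y ∈ openSegment ℝ U V ∧ y ∈ openSegment ℝ A B ∧ sqd A y < sqd A m) := by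
      by_cases hsV : 0 < dd A C m * dd A C V
      · exact core (sq2_vtx n a) (sq2_vtx n b) (sq2_vtx n c) (sq2_vtx n (T.tgt j))
          (vtx_ne hab) hmCD hmAB hxUV' hxAC hsV
      · have hsU : 0 < dd A C m * dd A C U := by
          rcases lt_trichotomy (dd A C m * dd A C V) 0 with hlt | heq | hgt
          · -- γ(V) < 0, so γ(U) > 0
            have h0 : xu * (dd A C m * dd A C U) + xv * (dd A C m * dd A C V) = 0 := by
              linear_combination dd A C m * hrel
            by_contra hle
            push_neg at hle
            nlinarith [mul_pos hxu hxv, mul_nonneg (le_of_lt hxu) (neg_nonneg.mpr hle),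
              mul_pos hxv (neg_pos.mpr hlt)]
          · exact absurd (mul_eq_zero.mp heq) (by
              rintro (h | h)
              · exact hσ h
              · exact hgV' h)
          · exact absurd hgt hsV
        have hres := core (sq2_vtx n a) (sq2_vtx n b) (sq2_vtx n c) (sq2_vtx n (T.src j))
          (vtx_ne hab) hmCD hmAB (by rwa [openSegment_symm] at hxUV') hxAC hsU
        rcases hres with ⟨y, hy1, hy2⟩ | ⟨y, hy1, hy2, hy3⟩
        · exact Or.inl ⟨y, by rwa [openSegment_symm] at hy1, hy2⟩
        · exact Or.inr ⟨y, by rwa [openSegment_symm] at hy1, hy2, hy3⟩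
    rcases hcontra with ⟨y, hyUV, hyCD⟩ | ⟨y, hyUV, hyAB, hsqd⟩
    · -- y is a crossing of T_j with T_{i0} : contradiction with noncross
      refine T.noncross j i0 hji0 ⟨y, hyUV, ?_⟩
      rcases hcd with ⟨h1, h2⟩ | ⟨h1, h2⟩
      · rwa [h1, h2]
      · rw [h1, h2]; rwa [openSegment_symm] at hyCD
    · -- y is a crossing of T_j with [A,B] closer to A : contradiction with hclosest
      have hE : ECross n T j a b := ⟨y, hyUV, hyAB⟩
      have hlt := hclosest j hj hE hji0 m ⟨hmST, hmAB⟩ y ⟨hyUV, hyAB⟩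
      have hlt2 : dist A y < dist A m := dist_lt_of_sqd hsqd
      exact absurd hlt (by rw [not_lt]; exact le_of_lt hlt2)
  obtain ⟨i, _, hsp⟩ := T.maximal a c ⟨hac, hadj⟩ hnc
  exact hno ⟨i, hsp⟩

end Glue

end

/-- the triangle with side `T_{i_0}` and third vertex `a` lies in `T`. -/
theorem triangle_over_closest_diagonal
    (n : ℕ) (hn : 1 ≤ n) (T : Triangulation n) (a b c d : Fin (n + 3))
    (i0 : Fin (2 * n + 3))
    (hab : a ≠ b) (hnadj : ¬ Adj n a b)
    (hM : ¬ ∃ i : Fin (2 * n + 3), Joins n T i a b)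
    (hi0d : i0.val < n) (hi0M : ECross n T i0 a b)
    (hclosest : ∀ j : Fin (2 * n + 3), j.val < n → ECross n T j a b → j ≠ i0 →
      ∀ x ∈ crossPts n T i0 a b, ∀ y ∈ crossPts n T j a b,
        dist (vtx n a) x < dist (vtx n a) y)
    (hcd : Joins n T i0 c d) :
    (∃ i : Fin (2 * n + 3), Joins n T i a c) ∧
    (∃ j : Fin (2 * n + 3), Joins n T j a d) := by
  constructor
  · exact exists_joins T a b c d i0 hab hM hi0d hi0M hclosest hcd
  · exact exists_joins T a b d c i0 hab hM hi0d hi0M hclosest (samePair_flip hcd)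
end
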